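/- arXiv:2210.14857 — 4 statements merged into one kernel-verified Lean document; each statement's English description precedes it below -/
import Mathlib

section
/- Let 2 ≤ N ≤ d and A, B, C₁ > 1. There exists ε₀* ∈ (0,1), depending only on B and N, such that for every ε₀ ∈ (0, ε₀*] and every ε₁ ∈ (0,1) there exist constants 0 < c ≤ C, depending only on d, N, A, B, C₁, ε₀ and ε₁, with the following property. Let γ ∈ 𝔊(B,N), λ ≥ 2, 0 < ρ ≤ B^{−2d}, let ξ ∈ ℝ^d satisfy C₁λ ≤ |ξ| ≤ 2C₁λ, and let s, σ₀ ∈ I be such that (a) ⟨γ^{(N−1)}(σ₀), ξ⟩ = 0, (b) |⟨γ^{(N)}(u), ξ⟩| ≥ (10A)^{−1}|ξ| for all u ∈ I, and (c) ε₁^{−2}/4 ≤ Σ_{i=1}^{N−1} |ε₀^{−1} λ^{−1} ρ^{i−N} ⟨γ^{(i)}(σ₀), ξ⟩|^{2/(N−i)} + |ε₀^{−1} ρ^{−1}(s − σ₀)|² ≤ 4 ε₁^{−2}. Then c λ ≤ Σ_{i=1}^{N−1} ρ^{i−N} |⟨γ^{(i)}(s), ξ⟩| ≤ C λ. -/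
open MeasureTheory Real Matrix
open scoped RealInnerProductSpace ENNReal

noncomputable section

abbrev E (d : ℕ) : Type := EuclideanSpace ℝ (Fin d)

def segI : Set ℝ := Set.Icc (-1) 1

/-- The class of curves 𝔊(B,L): `C^{2d}` bounds by `B` and the sum of squares of the `L×L`
minors of `(γ⁽¹⁾(s) ⋯ γ⁽ᴸ⁾(s))`, i.e. the Gram determinant, at least `B⁻²`. -/
def CurveClass {d : ℕ} (B : ℝ) (L : ℕ) (γ : ℝ → E d) : Prop :=
  ContDiff ℝ ((2 * d : ℕ) : ℕ∞) γ ∧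
  (∀ j ≤ 2 * d, ∀ s ∈ segI, ‖iteratedDeriv j γ s‖ ≤ B) ∧
  (∀ s ∈ segI,
    (B ^ 2)⁻¹ ≤
      (((Matrix.of fun i (j : Fin L) => iteratedDeriv ((j : ℕ) + 1) γ s i))ᵀ *
        (Matrix.of fun (i : Fin d) (j : Fin L) => iteratedDeriv ((j : ℕ) + 1) γ s i)).det)

lemma aux_exp_one (m : ℕ) (hm : 1 ≤ m) : (2:ℝ)/m * ((m:ℝ)/2) = 1 := by
  have hm0 : (0:ℝ) < m := by exact_mod_cast hm
  field_simp

lemma aux_rpow_le {x y : ℝ} (hx : 0 ≤ x) (hy : 0 ≤ y) (m : ℕ) (hm : 1 ≤ m)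
    (h : x ^ ((2:ℝ)/m) ≤ y^2) : x ≤ y^m := by
  have h2 := Real.rpow_le_rpow (Real.rpow_nonneg hx _) h (by positivity : (0:ℝ) ≤ (m:ℝ)/2)
  calc x = x ^ ((2:ℝ)/m * ((m:ℝ)/2)) := by rw [aux_exp_one m hm, Real.rpow_one]
    _ = (x ^ ((2:ℝ)/m)) ^ ((m:ℝ)/2) := Real.rpow_mul hx _ _
    _ ≤ (y^2) ^ ((m:ℝ)/2) := h2
    _ = y ^ (m:ℝ) := by
        rw [← Real.rpow_natCast y 2, ← Real.rpow_mul hy]; congr 1; ring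
    _ = y ^ m := Real.rpow_natCast y m

lemma aux_rpow_ge {x b : ℝ} (hx : 0 ≤ x) (hb : 0 ≤ b) (m : ℕ) (hm : 1 ≤ m)
    (h : b ≤ x ^ ((2:ℝ)/m)) : b ^ ((m:ℝ)/2) ≤ x := by
  have h2 := Real.rpow_le_rpow hb h (by positivity : (0:ℝ) ≤ (m:ℝ)/2)
  calc b ^ ((m:ℝ)/2) ≤ (x ^ ((2:ℝ)/m)) ^ ((m:ℝ)/2) := h2
    _ = x ^ ((2:ℝ)/m * ((m:ℝ)/2)) := (Real.rpow_mul hx _ _).symm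
    _ = x := by rw [aux_exp_one m hm, Real.rpow_one]

set_option maxHeartbeats 2000000 in
theorem stmt10 (d N : ℕ) (hN : 2 ≤ N) (hNd : N ≤ d) (B : ℝ) (hB : 1 < B) :
    ∃ ε₀star ∈ Set.Ioo (0 : ℝ) 1,
      ∀ A C₁ : ℝ, 1 < A → 1 < C₁ →
      ∀ ε₀ : ℝ, 0 < ε₀ → ε₀ ≤ ε₀star →
      ∀ ε₁ ∈ Set.Ioo (0 : ℝ) 1,
      ∃ c C : ℝ, 0 < c ∧ c ≤ C ∧
        ∀ γ : ℝ → E d, CurveClass B N γ →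
        ∀ lam : ℝ, 2 ≤ lam →
        ∀ ρ : ℝ, 0 < ρ → ρ ≤ (B ^ (2 * d))⁻¹ →
        ∀ ξ : E d, C₁ * lam ≤ ‖ξ‖ → ‖ξ‖ ≤ 2 * C₁ * lam →
        ∀ s ∈ segI, ∀ σ₀ ∈ segI,
          ⟪iteratedDeriv (N - 1) γ σ₀, ξ⟫ = 0 →
          (∀ u ∈ segI, (10 * A)⁻¹ * ‖ξ‖ ≤ |⟪iteratedDeriv N γ u, ξ⟫|) →
          ε₁⁻¹ ^ 2 / 4 ≤
            (∑ i ∈ Finset.Icc 1 (N - 1),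
                |ε₀⁻¹ * lam⁻¹ * ρ ^ ((i : ℤ) - (N : ℤ)) * ⟪iteratedDeriv i γ σ₀, ξ⟫| ^
                  ((2 : ℝ) / ((N : ℝ) - (i : ℝ))))
              + |ε₀⁻¹ * ρ⁻¹ * (s - σ₀)| ^ 2 →
          (∑ i ∈ Finset.Icc 1 (N - 1),
                |ε₀⁻¹ * lam⁻¹ * ρ ^ ((i : ℤ) - (N : ℤ)) * ⟪iteratedDeriv i γ σ₀, ξ⟫| ^
                  ((2 : ℝ) / ((N : ℝ) - (i : ℝ))))
              + |ε₀⁻¹ * ρ⁻¹ * (s - σ₀)| ^ 2 ≤ 4 * ε₁⁻¹ ^ 2 →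
          c * lam ≤
              (∑ i ∈ Finset.Icc 1 (N - 1),
                ρ ^ ((i : ℤ) - (N : ℤ)) * |⟪iteratedDeriv i γ s, ξ⟫|) ∧
            (∑ i ∈ Finset.Icc 1 (N - 1),
                ρ ^ ((i : ℤ) - (N : ℤ)) * |⟪iteratedDeriv i γ s, ξ⟫|) ≤ C * lam := by
  refine ⟨1/2, by norm_num, ?_⟩
  intro A C₁ hA hC₁ ε₀ hε₀ hε₀le ε₁ hε₁
  obtain ⟨hε₁0, hε₁1⟩ := hε₁
  set Ee : ℝ := ε₁⁻¹ with hEe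
  have hE1 : 1 < Ee := by
    rw [hEe]
    exact (one_lt_inv₀ hε₁0).2 hε₁1
  have hE0 : 0 < Ee := by linarith
  have hNr : (2:ℝ) ≤ (N:ℝ) := by exact_mod_cast hN
  set β : ℝ := Ee^2/(8*((N:ℝ)-1)) with hβdef
  have hβ0 : 0 < β := by
    apply div_pos (by positivity); linarith
  set κ : ℝ := min (β ^ ((1:ℝ)/2)) (β ^ (((N:ℕ):ℝ)/2)) with hκdef
  have hκ0 : 0 < κ := lt_min (Real.rpow_pos_of_pos hβ0 _) (Real.rpow_pos_of_pos hβ0 _)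
  have hB0 : (0:ℝ) < B := by linarith
  have hC₁0 : (0:ℝ) < C₁ := by linarith
  set δ : ℝ := ε₀ * min (Ee/4) (κ/(4*B*C₁*(4*Ee)^(N-1))) with hδdef
  have hδ0 : 0 < δ := by
    apply mul_pos hε₀
    apply lt_min (by positivity) (by positivity)
  set c : ℝ := min ((10*A)⁻¹ * C₁ * δ) (ε₀*κ/2) with hcdef
  have hA0 : (0:ℝ) < A := by linarith
  have hc0 : 0 < c := by
    apply lt_min (by positivity) (by positivity)
  set Cbig : ℝ := ((N-1 : ℕ):ℝ) * (2*B*C₁*(4*Ee)^N) + 1 with hCbig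
  refine ⟨c, max Cbig c, hc0, le_max_right _ _, ?_⟩
  intro γ hγ lam hlam ρ hρ hρle ξ hξl hξu s hs σ₀ hσ₀ ha hb hlow hup
  obtain ⟨hγC, hγB, -⟩ := hγ
  have hlam0 : (0:ℝ) < lam := by linarith
  have hN2d : N ≤ 2*d := by omega
  have hξ0 : (0:ℝ) < ‖ξ‖ := by nlinarith
  -- derivative facts
  have hD : ∀ j, j < 2*d → ∀ t : ℝ,
      HasDerivAt (fun u => ⟪iteratedDeriv j γ u, ξ⟫) ⟪iteratedDeriv (j+1) γ t, ξ⟫ t := by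
    intro j hj t
    have h1 : HasDerivAt (iteratedDeriv j γ) (iteratedDeriv (j+1) γ t) t := by
      rw [iteratedDeriv_succ]
      exact ((hγC.differentiable_iteratedDeriv j (by exact_mod_cast hj)) t).hasDerivAt
    have := h1.inner ℝ (hasDerivAt_const t ξ)
    simpa using this
  have hGB : ∀ j, j ≤ 2*d → ∀ t ∈ segI, |⟪iteratedDeriv j γ t, ξ⟫| ≤ B * ‖ξ‖ := by
    intro j hj t ht
    calc |⟪iteratedDeriv j γ t, ξ⟫| ≤ ‖iteratedDeriv j γ t‖ * ‖ξ‖ := abs_real_inner_le_norm _ _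
      _ ≤ B * ‖ξ‖ := mul_le_mul_of_nonneg_right (hγB j hj t ht) (norm_nonneg ξ)
  set J : Set ℝ := Set.uIcc s σ₀ with hJdef
  have hJI : J ⊆ segI := Set.uIcc_subset_Icc hs hσ₀
  have hsJ : s ∈ J := Set.left_mem_uIcc
  have hσJ : σ₀ ∈ J := Set.right_mem_uIcc
  have hJd : ∀ t ∈ J, |t - σ₀| ≤ |s - σ₀| := by
    intro t ht
    rw [Set.mem_uIcc] at ht
    have h1 := le_abs_self (s - σ₀)
    have h2 := neg_abs_le (s - σ₀)
    rw [abs_le]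
    rcases ht with ⟨u1, u2⟩ | ⟨u1, u2⟩ <;> constructor <;> linarith
  have hdiff : ∀ j, j < 2*d → ∀ M : ℝ, (∀ t ∈ J, |⟪iteratedDeriv (j+1) γ t, ξ⟫| ≤ M) →
      ∀ t ∈ J, |⟪iteratedDeriv j γ t, ξ⟫ - ⟪iteratedDeriv j γ σ₀, ξ⟫| ≤ M * |t - σ₀| := by
    intro j hj M hM t ht
    have := (convex_uIcc s σ₀).norm_image_sub_le_of_norm_hasDerivWithin_le
      (f := fun u => ⟪iteratedDeriv j γ u, ξ⟫) (f' := fun u => ⟪iteratedDeriv (j+1) γ u, ξ⟫)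
      (fun x hx => (hD j hj x).hasDerivWithinAt) (fun x hx => by
        simpa [Real.norm_eq_abs] using hM x hx) hσJ ht
    simpa [Real.norm_eq_abs] using this
  have hzpow : ∀ i : ℕ, i ≤ N → ρ ^ ((i:ℤ) - (N:ℤ)) = (ρ^(N-i))⁻¹ := by
    intro i hi
    have h1 : (i:ℤ) - (N:ℤ) = -((N-i:ℕ):ℤ) := by omega
    rw [h1, _root_.zpow_neg, zpow_natCast]
  have habs : ∀ i : ℕ, i ≤ N → ∀ X : ℝ,
      |ε₀⁻¹ * lam⁻¹ * ρ ^ ((i:ℤ) - (N:ℤ)) * X| = ε₀⁻¹ * lam⁻¹ * (ρ^(N-i))⁻¹ * |X| := by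
    intro i hi X
    rw [hzpow i hi, abs_mul, abs_mul, abs_mul, abs_of_pos (by positivity : (0:ℝ) < ε₀⁻¹),
      abs_of_pos (by positivity : (0:ℝ) < lam⁻¹), abs_of_pos (by positivity : (0:ℝ) < (ρ^(N-i))⁻¹)]
  have hcast : ∀ i : ℕ, i ≤ N → (N:ℝ) - (i:ℝ) = ((N-i:ℕ):ℝ) := by
    intro i hi
    push_cast [Nat.cast_sub hi]
    ring
  -- nonnegativity of the rpow terms
  have hrnn : ∀ i ∈ Finset.Icc 1 (N-1),
      (0:ℝ) ≤ |ε₀⁻¹ * lam⁻¹ * ρ ^ ((i:ℤ) - (N:ℤ)) * ⟪iteratedDeriv i γ σ₀, ξ⟫| ^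
        ((2 : ℝ) / ((N : ℝ) - (i : ℝ))) := fun i _ => Real.rpow_nonneg (abs_nonneg _) _
  -- each rpow term is at most (2Ee)^2
  have hterm_le : ∀ i ∈ Finset.Icc 1 (N-1),
      |ε₀⁻¹ * lam⁻¹ * ρ ^ ((i:ℤ) - (N:ℤ)) * ⟪iteratedDeriv i γ σ₀, ξ⟫| ^
        ((2 : ℝ) / ((N : ℝ) - (i : ℝ))) ≤ (2*Ee)^2 := by
    intro i hi
    have h1 := Finset.single_le_sum hrnn hi
    have h2 : (0:ℝ) ≤ |ε₀⁻¹ * ρ⁻¹ * (s - σ₀)| ^ 2 := by positivity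
    have : (2*Ee)^2 = 4 * ε₁⁻¹^2 := by rw [hEe]; ring
    linarith
  have hclose : |s - σ₀| ≤ 2*ε₀*ρ*Ee := by
    have h1 : (∑ i ∈ Finset.Icc 1 (N - 1),
        |ε₀⁻¹ * lam⁻¹ * ρ ^ ((i : ℤ) - (N : ℤ)) * ⟪iteratedDeriv i γ σ₀, ξ⟫| ^
          ((2 : ℝ) / ((N : ℝ) - (i : ℝ)))) ≥ 0 := Finset.sum_nonneg hrnn
    have h2 : |ε₀⁻¹ * ρ⁻¹ * (s - σ₀)| ^ 2 ≤ (2*Ee)^2 := by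
      have : (2*Ee)^2 = 4 * ε₁⁻¹^2 := by rw [hEe]; ring
      linarith
    have h3 : |ε₀⁻¹ * ρ⁻¹ * (s - σ₀)| ≤ 2*Ee := by
      nlinarith [abs_nonneg (ε₀⁻¹ * ρ⁻¹ * (s - σ₀))]
    have h4 : |ε₀⁻¹ * ρ⁻¹ * (s - σ₀)| = ε₀⁻¹ * ρ⁻¹ * |s - σ₀| := by
      rw [abs_mul, abs_mul, abs_of_pos (by positivity : (0:ℝ) < ε₀⁻¹),
        abs_of_pos (by positivity : (0:ℝ) < ρ⁻¹)]
    rw [h4] at h3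
    have h5 : ε₀⁻¹ * ρ⁻¹ * |s - σ₀| * (ε₀ * ρ) ≤ 2*Ee * (ε₀ * ρ) :=
      mul_le_mul_of_nonneg_right h3 (by positivity)
    have h6 : ε₀⁻¹ * ρ⁻¹ * |s - σ₀| * (ε₀ * ρ) = |s - σ₀| := by
      field_simp
    rw [h6] at h5
    linarith
  -- bound at σ₀ for 1 ≤ i ≤ N-1
  have hσb : ∀ i : ℕ, 1 ≤ i → i + 1 ≤ N →
      |⟪iteratedDeriv i γ σ₀, ξ⟫| ≤ ε₀ * lam * ρ^(N-i) * (2*Ee)^(N-i) := by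
    intro i hi1 hiN
    have hiN' : i ≤ N := by omega
    have him : i ∈ Finset.Icc 1 (N-1) := by
      rw [Finset.mem_Icc]; omega
    have h1 := hterm_le i him
    rw [habs i hiN', hcast i hiN'] at h1
    have h2 := aux_rpow_le (x := ε₀⁻¹ * lam⁻¹ * (ρ^(N-i))⁻¹ * |⟪iteratedDeriv i γ σ₀, ξ⟫|)
      (y := 2*Ee) (by positivity) (by positivity) (N-i) (by omega) h1
    have h3 : ε₀⁻¹ * lam⁻¹ * (ρ^(N-i))⁻¹ * |⟪iteratedDeriv i γ σ₀, ξ⟫| * (ε₀ * lam * ρ^(N-i))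
        ≤ (2*Ee)^(N-i) * (ε₀ * lam * ρ^(N-i)) := mul_le_mul_of_nonneg_right h2 (by positivity)
    have h4 : ε₀⁻¹ * lam⁻¹ * (ρ^(N-i))⁻¹ * |⟪iteratedDeriv i γ σ₀, ξ⟫| * (ε₀ * lam * ρ^(N-i))
        = |⟪iteratedDeriv i γ σ₀, ξ⟫| := by
      field_simp
    rw [h4] at h3
    linarith [h3]
  -- the key recursion
  have key : ∀ m : ℕ, m < N → ∀ i : ℕ, i + m = N → ∀ t ∈ J,
      |⟪iteratedDeriv i γ t, ξ⟫| ≤ 2*B*C₁*lam * ρ^m * (4*Ee)^m := by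
    intro m
    induction m with
    | zero =>
      intro _ i hi t ht
      have h1 := hGB i (by omega) t (hJI ht)
      have h2 : B * ‖ξ‖ ≤ B * (2*C₁*lam) := mul_le_mul_of_nonneg_left hξu (le_of_lt hB0)
      simp only [pow_zero, mul_one]
      linarith
    | succ m ih =>
      intro hm i hi t ht
      have hiN : i + 1 + m = N := by omega
      have hi1 : 1 ≤ i := by omega
      have IH := ih (by omega) (i+1) hiN
      have h1 := hdiff i (by omega) (2*B*C₁*lam * ρ^m * (4*Ee)^m) IH t ht
      have h2 := hσb i hi1 (by omega)
      have hNi : N - i = m + 1 := by omega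
      rw [hNi] at h2
      have h3 : |t - σ₀| ≤ 2*ε₀*ρ*Ee := le_trans (hJd t ht) hclose
      have h4 : |⟪iteratedDeriv i γ t, ξ⟫| ≤
          ε₀ * lam * ρ^(m+1) * (2*Ee)^(m+1) + (2*B*C₁*lam * ρ^m * (4*Ee)^m) * (2*ε₀*ρ*Ee) := by
        have h5 : (2*B*C₁*lam * ρ^m * (4*Ee)^m) * |t - σ₀| ≤
            (2*B*C₁*lam * ρ^m * (4*Ee)^m) * (2*ε₀*ρ*Ee) :=
          mul_le_mul_of_nonneg_left h3 (by positivity)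
        calc |⟪iteratedDeriv i γ t, ξ⟫|
            ≤ |⟪iteratedDeriv i γ σ₀, ξ⟫| + |⟪iteratedDeriv i γ t, ξ⟫ - ⟪iteratedDeriv i γ σ₀, ξ⟫| := by
              have := abs_sub_abs_le_abs_sub (⟪iteratedDeriv i γ t, ξ⟫) (⟪iteratedDeriv i γ σ₀, ξ⟫)
              linarith
          _ ≤ ε₀ * lam * ρ^(m+1) * (2*Ee)^(m+1) + (2*B*C₁*lam * ρ^m * (4*Ee)^m) * (2*ε₀*ρ*Ee) := by
              linarith
      -- final scalar inequality
      have hR : (0:ℝ) ≤ lam * ρ^m * ρ * (4*Ee)^m * Ee := by positivity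
      have e1 : ε₀ * lam * ρ^(m+1) * (2*Ee)^(m+1) ≤ 2*ε₀ * (lam * ρ^m * ρ * (4*Ee)^m * Ee) := by
        have hp : (2*Ee)^m ≤ (4*Ee)^m := pow_le_pow_left₀ (by positivity) (by linarith) m
        have : ε₀ * lam * (ρ^m * ρ) * ((2*Ee)^m * (2*Ee)) ≤ ε₀ * lam * (ρ^m * ρ) * ((4*Ee)^m * (2*Ee)) := by
          gcongr
        calc ε₀ * lam * ρ^(m+1) * (2*Ee)^(m+1) = ε₀ * lam * (ρ^m * ρ) * ((2*Ee)^m * (2*Ee)) := by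
              rw [pow_succ, pow_succ]
          _ ≤ ε₀ * lam * (ρ^m * ρ) * ((4*Ee)^m * (2*Ee)) := this
          _ = 2*ε₀ * (lam * ρ^m * ρ * (4*Ee)^m * Ee) := by ring
      have e2 : (2*B*C₁*lam * ρ^m * (4*Ee)^m) * (2*ε₀*ρ*Ee)
          = 4*B*C₁*ε₀ * (lam * ρ^m * ρ * (4*Ee)^m * Ee) := by ring
      have e3 : 2*B*C₁*lam * ρ^(m+1) * (4*Ee)^(m+1)
          = 8*B*C₁ * (lam * ρ^m * ρ * (4*Ee)^m * Ee) := by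
        rw [pow_succ, pow_succ]; ring
      have hBC : 1 ≤ B*C₁ := by nlinarith
      have base : 2*ε₀ + 4*B*C₁*ε₀ ≤ 8*B*C₁ := by
        nlinarith [mul_le_mul_of_nonneg_left hε₀le (le_of_lt (mul_pos hB0 hC₁0))]
      have := mul_le_mul_of_nonneg_right base hR
      rw [e3]
      linarith [e1, h4]
  -- upper bound
  have hub : (∑ i ∈ Finset.Icc 1 (N-1), ρ ^ ((i:ℤ)-(N:ℤ)) * |⟪iteratedDeriv i γ s, ξ⟫|)
      ≤ max Cbig c * lam := by
    have hstep : ∀ i ∈ Finset.Icc 1 (N-1),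
        ρ ^ ((i:ℤ)-(N:ℤ)) * |⟪iteratedDeriv i γ s, ξ⟫| ≤ 2*B*C₁*(4*Ee)^N * lam := by
      intro i hi
      rw [Finset.mem_Icc] at hi
      have hk := key (N-i) (by omega) i (by omega) s hsJ
      rw [hzpow i (by omega)]
      have h1 : (ρ^(N-i))⁻¹ * |⟪iteratedDeriv i γ s, ξ⟫| ≤
          (ρ^(N-i))⁻¹ * (2*B*C₁*lam * ρ^(N-i) * (4*Ee)^(N-i)) :=
        mul_le_mul_of_nonneg_left hk (by positivity)
      have h2 : (ρ^(N-i))⁻¹ * (2*B*C₁*lam * ρ^(N-i) * (4*Ee)^(N-i))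
          = 2*B*C₁*lam*(4*Ee)^(N-i) := by field_simp
      have h3 : (4*Ee)^(N-i) ≤ (4*Ee)^N := pow_le_pow_right₀ (by linarith) (by omega)
      have h4 : 2*B*C₁*lam*(4*Ee)^(N-i) ≤ 2*B*C₁*lam*(4*Ee)^N :=
        mul_le_mul_of_nonneg_left h3 (by positivity)
      have h5 : 2*B*C₁*lam*(4*Ee)^N = 2*B*C₁*(4*Ee)^N*lam := by ring
      linarith
    have hcardr : ((Finset.Icc 1 (N-1)).card : ℝ) = ((N-1:ℕ):ℝ) := by
      have h1 : (Finset.Icc 1 (N-1)).card = N - 1 := by rw [Nat.card_Icc]; omega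
      rw [h1]
    calc (∑ i ∈ Finset.Icc 1 (N-1), ρ ^ ((i:ℤ)-(N:ℤ)) * |⟪iteratedDeriv i γ s, ξ⟫|)
        ≤ ∑ _i ∈ Finset.Icc 1 (N-1), 2*B*C₁*(4*Ee)^N * lam := Finset.sum_le_sum hstep
      _ = ((Finset.Icc 1 (N-1)).card : ℝ) * (2*B*C₁*(4*Ee)^N * lam) := by
          rw [Finset.sum_const, nsmul_eq_mul]
      _ = ((N-1:ℕ):ℝ) * (2*B*C₁*(4*Ee)^N) * lam := by rw [hcardr]; ring
      _ ≤ Cbig * lam := by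
          rw [hCbig]
          have h6 : (0:ℝ) ≤ ((N-1:ℕ):ℝ) * (2*B*C₁*(4*Ee)^N) := by positivity
          nlinarith
      _ ≤ max Cbig c * lam := mul_le_mul_of_nonneg_right (le_max_left _ _) (by positivity)
  refine ⟨?_, hub⟩
  -- lower bound
  have hnn2 : ∀ i ∈ Finset.Icc 1 (N-1),
      (0:ℝ) ≤ ρ ^ ((i:ℤ)-(N:ℤ)) * |⟪iteratedDeriv i γ s, ξ⟫| := by
    intro i _
    have h1 : (0:ℝ) < ρ ^ ((i:ℤ)-(N:ℤ)) := zpow_pos hρ _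
    positivity
  by_cases hcase : δ * ρ ≤ |s - σ₀|
  · -- Case A : s is far from σ₀, use the mean value theorem and hypothesis (b)
    have hmem : N - 1 ∈ Finset.Icc 1 (N-1) := by rw [Finset.mem_Icc]; omega
    have hsingle := Finset.single_le_sum hnn2 hmem
    have hNm1 : N - 1 + 1 = N := by omega
    have hfd : ∀ x : ℝ, HasDerivAt (fun u => ⟪iteratedDeriv (N-1) γ u, ξ⟫)
        ⟪iteratedDeriv N γ x, ξ⟫ x := by
      intro x
      have h1 := hD (N-1) (by omega) x
      rwa [hNm1] at h1
    have hsne : s - σ₀ ≠ 0 := by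
      intro h0
      rw [h0, abs_zero] at hcase
      nlinarith
    have hmvt : ∃ u ∈ segI,
        ⟪iteratedDeriv (N-1) γ s, ξ⟫ = ⟪iteratedDeriv N γ u, ξ⟫ * (s - σ₀) := by
      have hsub : ∀ a b : ℝ, a ∈ segI → b ∈ segI → Set.Ioo a b ⊆ segI := by
        intro a b ha' hb' y hy
        have h1 : -1 ≤ a ∧ a ≤ 1 := ha'
        have h2 : -1 ≤ b ∧ b ≤ 1 := hb'
        exact ⟨by linarith [hy.1, h1.1], by linarith [hy.2, h2.2]⟩
      rcases lt_trichotomy σ₀ s with hlt | heq | hgt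
      · obtain ⟨u, hu, hslope⟩ := exists_hasDerivAt_eq_slope
          (fun v => ⟪iteratedDeriv (N-1) γ v, ξ⟫) (fun v => ⟪iteratedDeriv N γ v, ξ⟫) hlt
          (fun x _ => (hfd x).continuousAt.continuousWithinAt) (fun x _ => hfd x)
        refine ⟨u, hsub σ₀ s hσ₀ hs hu, ?_⟩
        rw [eq_div_iff (by intro h0; apply hsne; linarith)] at hslope
        rw [ha] at hslope
        linarith
      · exact absurd heq.symm (fun h => hsne (by rw [h]; ring))
      · obtain ⟨u, hu, hslope⟩ := exists_hasDerivAt_eq_slope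
          (fun v => ⟪iteratedDeriv (N-1) γ v, ξ⟫) (fun v => ⟪iteratedDeriv N γ v, ξ⟫) hgt
          (fun x _ => (hfd x).continuousAt.continuousWithinAt) (fun x _ => hfd x)
        refine ⟨u, hsub s σ₀ hs hσ₀ hu, ?_⟩
        rw [eq_div_iff (by intro h0; apply hsne; linarith)] at hslope
        rw [ha] at hslope
        linear_combination hslope
    obtain ⟨u, huI, hueq⟩ := hmvt
    have h1 : (10*A)⁻¹ * ‖ξ‖ ≤ |⟪iteratedDeriv N γ u, ξ⟫| := hb u huI
    have h2 : |⟪iteratedDeriv (N-1) γ s, ξ⟫| = |⟪iteratedDeriv N γ u, ξ⟫| * |s - σ₀| := by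
      rw [hueq, abs_mul]
    have h3 : (10*A)⁻¹ * (C₁*lam) * (δ*ρ) ≤ |⟪iteratedDeriv (N-1) γ s, ξ⟫| := by
      rw [h2]
      have h1' : (10*A)⁻¹ * (C₁*lam) ≤ (10*A)⁻¹ * ‖ξ‖ :=
        mul_le_mul_of_nonneg_left hξl (by positivity)
      apply mul_le_mul (le_trans h1' h1) hcase (by positivity) (abs_nonneg _)
    have hz : ρ ^ (((N-1:ℕ):ℤ)-(N:ℤ)) * |⟪iteratedDeriv (N-1) γ s, ξ⟫|
        = (ρ^(N-(N-1)))⁻¹ * |⟪iteratedDeriv (N-1) γ s, ξ⟫| := by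
      rw [hzpow (N-1) (by omega)]
    have hone : N - (N-1) = 1 := by omega
    have hterm : (10*A)⁻¹*C₁*δ*lam ≤ ρ ^ (((N-1:ℕ):ℤ)-(N:ℤ)) * |⟪iteratedDeriv (N-1) γ s, ξ⟫| := by
      rw [hz, hone, pow_one]
      have h5 := mul_le_mul_of_nonneg_left h3 (by positivity : (0:ℝ) ≤ ρ⁻¹)
      have h6 : ρ⁻¹ * ((10*A)⁻¹ * (C₁*lam) * (δ*ρ)) = (10*A)⁻¹*C₁*δ*lam := by
        field_simp
      linarith
    have hcle : c ≤ (10*A)⁻¹*C₁*δ := by rw [hcdef]; exact min_le_left _ _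
    have h7 : c * lam ≤ (10*A)⁻¹*C₁*δ*lam := mul_le_mul_of_nonneg_right hcle hlam0.le
    linarith
  · -- Case B : s is close to σ₀, use a large derivative at σ₀ and perturb
    push_neg at hcase
    have habs2 : |ε₀⁻¹ * ρ⁻¹ * (s - σ₀)| = ε₀⁻¹ * ρ⁻¹ * |s - σ₀| := by
      rw [abs_mul, abs_mul, abs_of_pos (by positivity : (0:ℝ) < ε₀⁻¹),
        abs_of_pos (by positivity : (0:ℝ) < ρ⁻¹)]
    have hδle1 : δ ≤ ε₀ * (Ee/4) := by
      rw [hδdef]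
      exact mul_le_mul_of_nonneg_left (min_le_left _ _) hε₀.le
    have hsq : |ε₀⁻¹ * ρ⁻¹ * (s-σ₀)|^2 < Ee^2/16 := by
      have h5 : ε₀⁻¹ * ρ⁻¹ * |s-σ₀| < ε₀⁻¹ * ρ⁻¹ * (δ*ρ) :=
        mul_lt_mul_of_pos_left hcase (by positivity)
      have h6 : ε₀⁻¹ * ρ⁻¹ * (δ*ρ) = δ/ε₀ := by field_simp
      have h7 : δ/ε₀ ≤ Ee/4 := by
        rw [div_le_iff₀ hε₀]
        linarith [hδle1]
      rw [habs2]
      have hx0 : (0:ℝ) ≤ ε₀⁻¹*ρ⁻¹*|s-σ₀| := by positivity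
      have hxlt : ε₀⁻¹*ρ⁻¹*|s-σ₀| < Ee/4 := by linarith
      nlinarith [hx0, hxlt, hE0]
    have hsum_ge : Ee^2/8 ≤ ∑ i ∈ Finset.Icc 1 (N - 1),
        |ε₀⁻¹ * lam⁻¹ * ρ ^ ((i : ℤ) - (N : ℤ)) * ⟪iteratedDeriv i γ σ₀, ξ⟫| ^
          ((2 : ℝ) / ((N : ℝ) - (i : ℝ))) := by
      nlinarith [sq_nonneg Ee]
    have hex : ∃ i₀ ∈ Finset.Icc 1 (N-1),
        β ≤ |ε₀⁻¹ * lam⁻¹ * ρ ^ ((i₀ : ℤ) - (N : ℤ)) * ⟪iteratedDeriv i₀ γ σ₀, ξ⟫| ^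
          ((2 : ℝ) / ((N : ℝ) - (i₀ : ℝ))) := by
      by_contra hcon
      push_neg at hcon
      have hne : (Finset.Icc 1 (N-1)).Nonempty := ⟨1, by rw [Finset.mem_Icc]; omega⟩
      have h8 := Finset.sum_lt_sum_of_nonempty hne hcon
      rw [Finset.sum_const, nsmul_eq_mul] at h8
      have hcardr : ((Finset.Icc 1 (N-1)).card : ℝ) = (N:ℝ) - 1 := by
        have h1 : (Finset.Icc 1 (N-1)).card = N - 1 := by rw [Nat.card_Icc]; omega
        rw [h1, Nat.cast_sub (by omega), Nat.cast_one]
      rw [hcardr] at h8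
      have hgen : ∀ a x : ℝ, a ≠ 0 → a * (x/(8*a)) = x/8 := by
        intro a x h
        field_simp
      have hne' : (N:ℝ) - 1 ≠ 0 := by linarith
      have h9 : ((N:ℝ) - 1) * β = Ee^2/8 := by
        rw [hβdef]; exact hgen _ _ hne'
      rw [h9] at h8
      linarith
    obtain ⟨i₀, hi₀mem, hi₀⟩ := hex
    have hi₀mem' := hi₀mem
    rw [Finset.mem_Icc] at hi₀mem'
    have hm₀1 : 1 ≤ N - i₀ := by omega
    have hm₀N : N - i₀ ≤ N - 1 := by omega
    rw [habs i₀ (by omega), hcast i₀ (by omega)] at hi₀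
    have hge := aux_rpow_ge
      (x := ε₀⁻¹ * lam⁻¹ * (ρ^(N-i₀))⁻¹ * |⟪iteratedDeriv i₀ γ σ₀, ξ⟫|)
      (b := β) (by positivity) hβ0.le (N-i₀) hm₀1 hi₀
    have hκle : κ ≤ β ^ (((N-i₀:ℕ):ℝ)/2) := by
      rcases le_or_gt 1 β with h | h
      · calc κ ≤ β ^ ((1:ℝ)/2) := by rw [hκdef]; exact min_le_left _ _
          _ ≤ β ^ (((N-i₀:ℕ):ℝ)/2) := by
              apply Real.rpow_le_rpow_of_exponent_le h
              have h1 : (1:ℝ) ≤ ((N-i₀:ℕ):ℝ) := by exact_mod_cast hm₀1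
              linarith
      · calc κ ≤ β ^ (((N:ℕ):ℝ)/2) := by rw [hκdef]; exact min_le_right _ _
          _ ≤ β ^ (((N-i₀:ℕ):ℝ)/2) := by
              apply Real.rpow_le_rpow_of_exponent_ge hβ0 h.le
              have h1 : ((N-i₀:ℕ):ℝ) ≤ ((N:ℕ):ℝ) := by
                exact_mod_cast (by omega : N - i₀ ≤ N)
              linarith
    have hx : κ ≤ ε₀⁻¹ * lam⁻¹ * (ρ^(N-i₀))⁻¹ * |⟪iteratedDeriv i₀ γ σ₀, ξ⟫| :=
      le_trans hκle hge
    have hσlow : ε₀ * lam * ρ^(N-i₀) * κ ≤ |⟪iteratedDeriv i₀ γ σ₀, ξ⟫| := by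
      have h1 := mul_le_mul_of_nonneg_right hx
        (by positivity : (0:ℝ) ≤ ε₀*lam*ρ^(N-i₀))
      have h2 : ε₀⁻¹ * lam⁻¹ * (ρ^(N-i₀))⁻¹ * |⟪iteratedDeriv i₀ γ σ₀, ξ⟫| *
          (ε₀*lam*ρ^(N-i₀)) = |⟪iteratedDeriv i₀ γ σ₀, ξ⟫| := by
        field_simp
      have h3 : κ * (ε₀*lam*ρ^(N-i₀)) = ε₀ * lam * ρ^(N-i₀) * κ := by ring
      rw [h2, h3] at h1
      exact h1
    -- perturb to s
    have hkey := key (N-i₀-1) (by omega) (i₀+1) (by omega)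
    have hpert := hdiff i₀ (by omega) (2*B*C₁*lam * ρ^(N-i₀-1) * (4*Ee)^(N-i₀-1)) hkey s hsJ
    have hδle2 : δ ≤ ε₀ * (κ/(4*B*C₁*(4*Ee)^(N-1))) := by
      rw [hδdef]
      exact mul_le_mul_of_nonneg_left (min_le_right _ _) hε₀.le
    have h4 : δ * (4*B*C₁*(4*Ee)^(N-1)) ≤ ε₀*κ := by
      have hpos : (0:ℝ) < 4*B*C₁*(4*Ee)^(N-1) := by positivity
      calc δ * (4*B*C₁*(4*Ee)^(N-1))
          ≤ (ε₀ * (κ/(4*B*C₁*(4*Ee)^(N-1)))) * (4*B*C₁*(4*Ee)^(N-1)) :=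
            mul_le_mul_of_nonneg_right hδle2 hpos.le
        _ = ε₀*κ := by field_simp
    have h3p : ρ^(N-i₀-1) * ρ = ρ^(N-i₀) := by
      rw [← pow_succ]
      congr 1
      omega
    have hM : (2*B*C₁*lam*ρ^(N-i₀-1)*(4*Ee)^(N-i₀-1)) * |s-σ₀| ≤ ε₀*κ/2 * lam * ρ^(N-i₀) := by
      calc (2*B*C₁*lam*ρ^(N-i₀-1)*(4*Ee)^(N-i₀-1)) * |s-σ₀|
          ≤ (2*B*C₁*lam*ρ^(N-i₀-1)*(4*Ee)^(N-i₀-1)) * (δ*ρ) :=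
            mul_le_mul_of_nonneg_left hcase.le (by positivity)
        _ ≤ (2*B*C₁*lam*ρ^(N-i₀-1)*(4*Ee)^(N-1)) * (δ*ρ) := by
            have h2 : (4*Ee)^(N-i₀-1) ≤ (4*Ee)^(N-1) := pow_le_pow_right₀ (by linarith) (by omega)
            exact mul_le_mul_of_nonneg_right
              (mul_le_mul_of_nonneg_left h2 (by positivity)) (by positivity)
        _ = (lam * (ρ^(N-i₀-1)*ρ) / 2) * (δ * (4*B*C₁*(4*Ee)^(N-1))) := by ring
        _ ≤ (lam * (ρ^(N-i₀-1)*ρ) / 2) * (ε₀*κ) :=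
            mul_le_mul_of_nonneg_left h4 (by positivity)
        _ = ε₀*κ/2 * lam * ρ^(N-i₀) := by rw [h3p]; ring
    have hslow : ε₀*κ/2 * lam * ρ^(N-i₀) ≤ |⟪iteratedDeriv i₀ γ s, ξ⟫| := by
      have htri := abs_sub_abs_le_abs_sub (⟪iteratedDeriv i₀ γ σ₀, ξ⟫) (⟪iteratedDeriv i₀ γ s, ξ⟫)
      have hcomm : |⟪iteratedDeriv i₀ γ σ₀, ξ⟫ - ⟪iteratedDeriv i₀ γ s, ξ⟫|
          = |⟪iteratedDeriv i₀ γ s, ξ⟫ - ⟪iteratedDeriv i₀ γ σ₀, ξ⟫| := abs_sub_comm _ _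
      have h2P : ε₀ * lam * ρ^(N-i₀) * κ = 2*(ε₀*κ/2 * lam * ρ^(N-i₀)) := by ring
      rw [hcomm] at htri
      linarith
    have hsingle := Finset.single_le_sum hnn2 hi₀mem
    have hterm : c * lam ≤ ρ^((i₀:ℤ)-(N:ℤ)) * |⟪iteratedDeriv i₀ γ s, ξ⟫| := by
      rw [hzpow i₀ (by omega)]
      have h1 := mul_le_mul_of_nonneg_left hslow
        (by positivity : (0:ℝ) ≤ (ρ^(N-i₀))⁻¹)
      have h2 : (ρ^(N-i₀))⁻¹ * (ε₀*κ/2 * lam * ρ^(N-i₀)) = ε₀*κ/2 * lam := by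
        field_simp
      have h3 : c ≤ ε₀*κ/2 := by rw [hcdef]; exact min_le_right _ _
      have h5 : c * lam ≤ ε₀*κ/2 * lam := mul_le_mul_of_nonneg_right h3 hlam0.le
      linarith
    linarith

end
end

section
/- Let 2 ≤ N ≤ d, B > 1, γ ∈ 𝔊(B,N), s₀ ∈ I, 0 < ρ < 1, and let T and T* := (T^{−1})^⊤ be the associated rescaling maps. Then: (a) there exists C > 0 depending only on B, N and d such that |T* ξ| ≤ C ρ^{−N} |ξ| for every ξ ∈ ℝ^d; and (b) for every K ≥ 1 there exists c > 0, depending only on K, B, N and d, such that whenever η ∈ ℝ^d satisfies |⟨γ^{(i)}(s₀), η⟩| ≤ K ρ^{N−i} |η| for all 1 ≤ i ≤ N−1, one has, writing ξ := T^⊤ η (so that η = T* ξ), the lower bound |T* ξ| ≥ c ρ^{−N} |ξ|. -/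
open MeasureTheory Real Matrix
open scoped RealInnerProductSpace ENNReal

noncomputable section

lemma aux_decomp {d N : ℕ} {B : ℝ} (hB : 1 < B) (u : Fin N → E d)
    (hnorm : ∀ j, ‖u j‖ ≤ B)
    (hdet : (B ^ 2)⁻¹ ≤
      (((Matrix.of fun i (j : Fin N) => u j i))ᵀ *
        (Matrix.of fun (i : Fin d) (j : Fin N) => u j i)).det)
    (v : E d) :
    ∃ a : Fin N → ℝ, ∃ w : E d,
      v = (∑ j, a j • u j) + w ∧ (∀ j, ⟪u j, w⟫ = 0) ∧
      (∀ j, |a j| ≤ (N * N.factorial * B ^ (2 * N + 3)) * ‖v‖) ∧ ‖w‖ ≤ ‖v‖ := by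
  have hB0 : (0:ℝ) < B := lt_trans one_pos hB
  set M : Matrix (Fin N) (Fin N) ℝ :=
    ((Matrix.of fun i (j : Fin N) => u j i))ᵀ *
      (Matrix.of fun (i : Fin d) (j : Fin N) => u j i) with hMdef
  have hM : ∀ i j, M i j = ⟪u i, u j⟫ := by
    intro i j
    simp [hMdef, Matrix.mul_apply, PiLp.inner_apply, RCLike.inner_apply]
    exact Finset.sum_congr rfl fun _ _ => mul_comm _ _
  have hdetpos : 0 < M.det := lt_of_lt_of_le (by positivity) hdet
  have hunit : IsUnit M.det := hdetpos.ne'.isUnit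
  set b : Fin N → ℝ := fun j => ⟪u j, v⟫ with hbdef
  set a : Fin N → ℝ := M⁻¹.mulVec b with hadef
  set w : E d := v - ∑ j, a j • u j with hwdef
  have horth : ∀ i, ⟪u i, w⟫ = 0 := by
    intro i
    have h1 : ⟪u i, ∑ j, a j • u j⟫ = (M.mulVec a) i := by
      rw [inner_sum]
      simp only [real_inner_smul_right, Matrix.mulVec, dotProduct, hM]
      exact Finset.sum_congr rfl fun j _ => mul_comm _ _
    have h2 : M.mulVec a = b := by
      rw [hadef, Matrix.mulVec_mulVec, Matrix.mul_nonsing_inv _ hunit, Matrix.one_mulVec]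
    rw [hwdef, inner_sub_right, h1, h2]
    simp [hbdef]
  have hwv : ‖w‖ ≤ ‖v‖ := by
    have hz : ⟪∑ j, a j • u j, w⟫ = 0 := by
      rw [sum_inner]
      refine Finset.sum_eq_zero fun j _ => ?_
      rw [real_inner_smul_left, horth j, mul_zero]
    have hww : ⟪w, w⟫ = ⟪v, w⟫ := by
      have h3 : ⟪v - ∑ j, a j • u j, w⟫ = ⟪v, w⟫ := by
        rw [inner_sub_left, hz, sub_zero]
      exact h3
    rcases eq_or_lt_of_le (norm_nonneg w) with h0 | h0
    · rw [← h0]; exact norm_nonneg v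
    · have : ‖w‖ * ‖w‖ ≤ ‖v‖ * ‖w‖ := by
        rw [← real_inner_self_eq_norm_mul_norm, hww]
        exact real_inner_le_norm v w
      exact le_of_mul_le_mul_right this h0
  refine ⟨a, w, by rw [hwdef]; abel, horth, ?_, hwv⟩
  -- bound on a
  have hMentry : ∀ i j, |M i j| ≤ B ^ 2 := by
    intro i j
    rw [hM]
    calc |⟪u i, u j⟫| ≤ ‖u i‖ * ‖u j‖ := abs_real_inner_le_norm _ _
      _ ≤ B * B := mul_le_mul (hnorm i) (hnorm j) (norm_nonneg _) hB0.le
      _ = B ^ 2 := (sq B).symm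
  have hadj : ∀ i j, |M.adjugate i j| ≤ N.factorial * B ^ (2 * N) := by
    intro i j
    rw [Matrix.adjugate_apply]
    have hx : ∀ k l, |(M.updateRow j (Pi.single i 1)) k l| ≤ B ^ 2 := by
      intro k l
      rcases eq_or_ne k j with rfl | hkj
      · rw [Matrix.updateRow_self]
        rcases eq_or_ne l i with rfl | hli
        · rw [Pi.single_eq_same, abs_one]; nlinarith
        · rw [Pi.single_eq_of_ne hli, abs_zero]; positivity
      · rw [Matrix.updateRow_ne hkj]; exact hMentry k l
    have := Matrix.det_le (abv := (AbsoluteValue.abs : AbsoluteValue ℝ ℝ)) hx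
    simp only [Fintype.card_fin, nsmul_eq_mul] at this
    calc |(M.updateRow j (Pi.single i 1)).det| ≤ N.factorial * (B ^ 2) ^ N := this
      _ = N.factorial * B ^ (2 * N) := by rw [← pow_mul]
  have hdetinv : M.det⁻¹ ≤ B ^ 2 := by
    have h1 : ((B:ℝ) ^ 2)⁻¹ > 0 := by positivity
    calc M.det⁻¹ ≤ ((B ^ 2)⁻¹)⁻¹ := by
          apply inv_anti₀ h1 hdet
      _ = B ^ 2 := inv_inv _
  have hb : ∀ k, |b k| ≤ B * ‖v‖ := by
    intro k
    calc |b k| ≤ ‖u k‖ * ‖v‖ := abs_real_inner_le_norm _ _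
      _ ≤ B * ‖v‖ := mul_le_mul_of_nonneg_right (hnorm k) (norm_nonneg _)
  intro j
  have hinv_entry : ∀ k, |M⁻¹ j k| ≤ B ^ 2 * (N.factorial * B ^ (2 * N)) := by
    intro k
    rw [Matrix.inv_def, Ring.inverse_eq_inv']
    simp only [Matrix.smul_apply, smul_eq_mul, abs_mul]
    have h1 : |M.det⁻¹| = M.det⁻¹ := abs_of_pos (by positivity)
    rw [h1]
    apply mul_le_mul hdetinv (hadj j k) (abs_nonneg _) (by positivity)
  have : |a j| ≤ ∑ k : Fin N, (B ^ 2 * (N.factorial * B ^ (2 * N)) * (B * ‖v‖)) := by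
    rw [hadef]
    calc |(M⁻¹.mulVec b) j| = |∑ k, M⁻¹ j k * b k| := rfl
      _ ≤ ∑ k, |M⁻¹ j k * b k| := Finset.abs_sum_le_sum_abs _ _
      _ ≤ ∑ k : Fin N, (B ^ 2 * (N.factorial * B ^ (2 * N)) * (B * ‖v‖)) := by
          apply Finset.sum_le_sum
          intro k _
          rw [abs_mul]
          exact mul_le_mul (hinv_entry k) (hb k) (abs_nonneg _) (by positivity)
  calc |a j| ≤ ∑ k : Fin N, (B ^ 2 * (N.factorial * B ^ (2 * N)) * (B * ‖v‖)) := this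
    _ = N * N.factorial * B ^ (2 * N + 3) * ‖v‖ := by
        rw [Finset.sum_const, Finset.card_univ, Fintype.card_fin, nsmul_eq_mul]
        ring

set_option maxHeartbeats 1000000 in
theorem stmt12 (d N : ℕ) (hN : 2 ≤ N) (hNd : N ≤ d) (B : ℝ) (hB : 1 < B) :
    (∃ C > 0, ∀ γ : ℝ → E d, CurveClass B N γ →
      ∀ s₀ ∈ segI, ∀ ρ : ℝ, 0 < ρ → ρ < 1 →
        ∀ T : E d ≃ₗ[ℝ] E d,
          (∀ i : ℕ, 1 ≤ i → i ≤ N →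
            T (iteratedDeriv i γ s₀) = ρ ^ i • iteratedDeriv i γ s₀) →
          (∀ v : E d, (∀ i : ℕ, 1 ≤ i → i ≤ N → ⟪iteratedDeriv i γ s₀, v⟫ = 0) →
            T v = ρ ^ N • v) →
          ∀ ξ : E d,
            ‖LinearMap.adjoint T.symm.toLinearMap ξ‖ ≤ C * ρ ^ (-(N : ℤ)) * ‖ξ‖) ∧
    (∀ K : ℝ, 1 ≤ K → ∃ c > 0, ∀ γ : ℝ → E d, CurveClass B N γ →
      ∀ s₀ ∈ segI, ∀ ρ : ℝ, 0 < ρ → ρ < 1 →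
        ∀ T : E d ≃ₗ[ℝ] E d,
          (∀ i : ℕ, 1 ≤ i → i ≤ N →
            T (iteratedDeriv i γ s₀) = ρ ^ i • iteratedDeriv i γ s₀) →
          (∀ v : E d, (∀ i : ℕ, 1 ≤ i → i ≤ N → ⟪iteratedDeriv i γ s₀, v⟫ = 0) →
            T v = ρ ^ N • v) →
          ∀ η : E d,
            (∀ i : ℕ, 1 ≤ i → i ≤ N - 1 →
              |⟪iteratedDeriv i γ s₀, η⟫| ≤ K * ρ ^ (N - i) * ‖η‖) →
            c * ρ ^ (-(N : ℤ)) * ‖LinearMap.adjoint T.toLinearMap η‖ ≤ ‖η‖) := by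
  have hB0 : (0:ℝ) < B := lt_trans one_pos hB
  set C₀ : ℝ := N * N.factorial * B ^ (2 * N + 3) with hC₀def
  have hNpos : (0:ℝ) < N := by exact_mod_cast (by omega : 0 < N)
  have hfacpos : (0:ℝ) < N.factorial := by exact_mod_cast N.factorial_pos
  have hC₀pos : 0 < C₀ := by rw [hC₀def]; positivity
  constructor
  · -- part (a)
    refine ⟨N * C₀ * B + 1, by positivity, ?_⟩
    intro γ hγ s₀ hs₀ ρ hρ0 hρ1 T hT1 hT2 ξ
    have hρN : (0:ℝ) < ρ ^ N := pow_pos hρ0 N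
    have hz : (ρ : ℝ) ^ (-(N : ℤ)) = (ρ ^ N)⁻¹ := by
      rw [_root_.zpow_neg, zpow_natCast]
    rw [hz]
    set u : Fin N → E d := fun j => iteratedDeriv ((j : ℕ) + 1) γ s₀ with hudef
    have hnorm : ∀ j, ‖u j‖ ≤ B := by
      intro j
      exact hγ.2.1 ((j : ℕ) + 1) (by have := j.isLt; omega) s₀ hs₀
    have hdet := hγ.2.2 s₀ hs₀
    -- key pointwise bound for T.symm
    have key : ∀ v : E d, ‖T.symm v‖ ≤ (N * C₀ * B + 1) * (ρ ^ N)⁻¹ * ‖v‖ := by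
      intro v
      obtain ⟨a, w, hvdec, hworth, ha, hwv⟩ := aux_decomp hB u hnorm hdet v
      have hTw : T w = ρ ^ N • w := by
        apply hT2
        intro i hi1 hiN
        have h := hworth ⟨i - 1, by omega⟩
        simpa [hudef, Nat.sub_add_cancel hi1] using h
      set x : E d := (∑ j : Fin N, ((ρ ^ ((j : ℕ) + 1))⁻¹ * a j) • u j) + (ρ ^ N)⁻¹ • w with hxdef
      have hterm : ∀ j : Fin N, T (((ρ ^ ((j : ℕ) + 1))⁻¹ * a j) • u j) = a j • u j := by
        intro j
        rw [_root_.map_smul, hT1 ((j : ℕ) + 1) (by omega) (by have := j.isLt; omega), smul_smul]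
        congr 1
        have : (ρ : ℝ) ^ ((j : ℕ) + 1) ≠ 0 := (pow_pos hρ0 _).ne'
        field_simp
      have hTx : T x = v := by
        rw [hxdef, map_add, map_sum]
        rw [Finset.sum_congr rfl fun j _ => hterm j]
        rw [_root_.map_smul, hTw, smul_smul, inv_mul_cancel₀ hρN.ne', one_smul]
        exact hvdec.symm
      have hsy : T.symm v = x := by rw [← hTx]; exact T.symm_apply_apply x
      rw [hsy]
      have hbound : ∀ j : Fin N, ‖((ρ ^ ((j : ℕ) + 1))⁻¹ * a j) • u j‖ ≤
          (ρ ^ N)⁻¹ * (C₀ * ‖v‖) * B := by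
        intro j
        rw [norm_smul, Real.norm_eq_abs, abs_mul,
          abs_of_pos (inv_pos.mpr (pow_pos hρ0 _))]
        have h1 : (ρ ^ ((j : ℕ) + 1))⁻¹ ≤ (ρ ^ N)⁻¹ := by
          apply inv_anti₀ hρN
          exact pow_le_pow_of_le_one hρ0.le hρ1.le (by have := j.isLt; omega)
        have h2 : |a j| ≤ C₀ * ‖v‖ := ha j
        exact mul_le_mul (mul_le_mul h1 h2 (abs_nonneg _) (by positivity)) (hnorm j)
          (norm_nonneg _) (by positivity)
      calc ‖x‖ ≤ ‖∑ j : Fin N, ((ρ ^ ((j : ℕ) + 1))⁻¹ * a j) • u j‖ + ‖(ρ ^ N)⁻¹ • w‖ :=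
            norm_add_le _ _
        _ ≤ (∑ _j : Fin N, (ρ ^ N)⁻¹ * (C₀ * ‖v‖) * B) + (ρ ^ N)⁻¹ * ‖v‖ := by
            gcongr
            · exact le_trans (norm_sum_le _ _) (Finset.sum_le_sum fun j _ => hbound j)
            · rw [norm_smul, Real.norm_eq_abs, abs_of_pos (inv_pos.mpr hρN)]
              exact mul_le_mul_of_nonneg_left hwv (by positivity)
        _ = (N * C₀ * B + 1) * (ρ ^ N)⁻¹ * ‖v‖ := by
            rw [Finset.sum_const, Finset.card_univ, Fintype.card_fin, nsmul_eq_mul]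
            ring
    -- adjoint bound
    set y : E d := LinearMap.adjoint T.symm.toLinearMap ξ with hydef
    have hyy : ‖y‖ * ‖y‖ ≤ ((N * C₀ * B + 1) * (ρ ^ N)⁻¹ * ‖ξ‖) * ‖y‖ := by
      have h1 : ‖y‖ * ‖y‖ = ⟪y, y⟫ := (real_inner_self_eq_norm_mul_norm y).symm
      have h2 : ⟪y, y⟫ = ⟪ξ, T.symm y⟫ := by
        rw [hydef]
        exact LinearMap.adjoint_inner_left _ _ _
      rw [h1, h2]
      calc ⟪ξ, T.symm y⟫ ≤ ‖ξ‖ * ‖T.symm y‖ := real_inner_le_norm _ _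
        _ ≤ ‖ξ‖ * ((N * C₀ * B + 1) * (ρ ^ N)⁻¹ * ‖y‖) :=
            mul_le_mul_of_nonneg_left (key y) (norm_nonneg _)
        _ = ((N * C₀ * B + 1) * (ρ ^ N)⁻¹ * ‖ξ‖) * ‖y‖ := by ring
    rcases eq_or_lt_of_le (norm_nonneg y) with h0 | h0
    · rw [← h0]; positivity
    · exact le_of_mul_le_mul_right hyy h0
  · -- part (b)
    intro K hK
    refine ⟨((N : ℝ) * C₀ * (K * B) + 1)⁻¹, by positivity, ?_⟩
    intro γ hγ s₀ hs₀ ρ hρ0 hρ1 T hT1 hT2 η hη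
    have hρN : (0:ℝ) < ρ ^ N := pow_pos hρ0 N
    have hz : (ρ : ℝ) ^ (-(N : ℤ)) = (ρ ^ N)⁻¹ := by
      rw [_root_.zpow_neg, zpow_natCast]
    rw [hz]
    set u : Fin N → E d := fun j => iteratedDeriv ((j : ℕ) + 1) γ s₀ with hudef
    have hnorm : ∀ j, ‖u j‖ ≤ B := by
      intro j
      exact hγ.2.1 ((j : ℕ) + 1) (by have := j.isLt; omega) s₀ hs₀
    have hdet := hγ.2.2 s₀ hs₀
    set D : ℝ := (N : ℝ) * C₀ * (K * B) + 1 with hDdef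
    have hDpos : 0 < D := by positivity
    set y : E d := LinearMap.adjoint T.toLinearMap η with hydef
    obtain ⟨a, w, hydec, hworth, ha, hwv⟩ := aux_decomp hB u hnorm hdet y
    have hTw : T w = ρ ^ N • w := by
      apply hT2
      intro i hi1 hiN
      have h := hworth ⟨i - 1, by omega⟩
      simpa [hudef, Nat.sub_add_cancel hi1] using h
    have hTy : T y = (∑ j, a j • (ρ ^ ((j : ℕ) + 1)) • u j) + ρ ^ N • w := by
      rw [hydec, map_add, map_sum, hTw]
      congr 1
      refine Finset.sum_congr rfl fun j _ => ?_
      rw [_root_.map_smul, hT1 ((j : ℕ) + 1) (by omega) (by have := j.isLt; omega)]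
    have hexp : ⟪η, T y⟫ = (∑ j, a j * (ρ ^ ((j : ℕ) + 1) * ⟪η, u j⟫)) + ρ ^ N * ⟪η, w⟫ := by
      rw [hTy, inner_add_right, inner_sum]
      simp only [real_inner_smul_right]
    have hinner : ∀ j : Fin N, ρ ^ ((j : ℕ) + 1) * |⟪η, u j⟫| ≤ K * B * (ρ ^ N * ‖η‖) := by
      intro j
      rcases eq_or_ne ((j : ℕ) + 1) N with hn | hn
      · rw [hn]
        have h1 : |⟪η, u j⟫| ≤ ‖η‖ * B := by
          calc |⟪η, u j⟫| ≤ ‖η‖ * ‖u j‖ := abs_real_inner_le_norm _ _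
            _ ≤ ‖η‖ * B := mul_le_mul_of_nonneg_left (hnorm j) (norm_nonneg _)
        nlinarith [mul_le_mul_of_nonneg_left h1 hρN.le, hK,
          mul_nonneg (mul_nonneg hB0.le hρN.le) (norm_nonneg η)]
      · have hjN : (j : ℕ) + 1 ≤ N - 1 := by have := j.isLt; omega
        have h := hη ((j : ℕ) + 1) (by omega) hjN
        rw [real_inner_comm] at h
        have h2 : ρ ^ ((j : ℕ) + 1) * |⟪η, u j⟫| ≤
            ρ ^ ((j : ℕ) + 1) * (K * ρ ^ (N - ((j : ℕ) + 1)) * ‖η‖) :=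
          mul_le_mul_of_nonneg_left h (by positivity)
        have h3 : ρ ^ ((j : ℕ) + 1) * (K * ρ ^ (N - ((j : ℕ) + 1)) * ‖η‖) =
            K * (ρ ^ N * ‖η‖) := by
          have hpw : ρ ^ N = ρ ^ ((j : ℕ) + 1) * ρ ^ (N - ((j : ℕ) + 1)) := by
            rw [← pow_add]; congr 1; have := j.isLt; omega
          rw [hpw]; ring
        rw [h3] at h2
        calc ρ ^ ((j : ℕ) + 1) * |⟪η, u j⟫| ≤ K * (ρ ^ N * ‖η‖) := h2
          _ ≤ K * B * (ρ ^ N * ‖η‖) := by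
              have hx : (0:ℝ) ≤ K * (ρ ^ N * ‖η‖) := by positivity
              nlinarith [hx, hB]
    have hyy : ‖y‖ * ‖y‖ ≤ (D * (ρ ^ N * ‖η‖)) * ‖y‖ := by
      have h1 : ‖y‖ * ‖y‖ = ⟪y, y⟫ := (real_inner_self_eq_norm_mul_norm y).symm
      have h2 : ⟪y, y⟫ = ⟪η, T y⟫ := by
        rw [hydef]
        exact LinearMap.adjoint_inner_left _ _ _
      rw [h1, h2, hexp]
      calc (∑ j, a j * (ρ ^ ((j : ℕ) + 1) * ⟪η, u j⟫)) + ρ ^ N * ⟪η, w⟫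
          ≤ (∑ _j : Fin N, (C₀ * ‖y‖) * (K * B * (ρ ^ N * ‖η‖))) + ρ ^ N * (‖η‖ * ‖y‖) := by
            gcongr ?_ + ?_
            · calc (∑ j, a j * (ρ ^ ((j : ℕ) + 1) * ⟪η, u j⟫))
                  ≤ ∑ j, |a j * (ρ ^ ((j : ℕ) + 1) * ⟪η, u j⟫)| :=
                    Finset.sum_le_sum fun j _ => le_abs_self _
                _ ≤ ∑ _j : Fin N, (C₀ * ‖y‖) * (K * B * (ρ ^ N * ‖η‖)) := by
                    refine Finset.sum_le_sum fun j _ => ?_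
                    rw [abs_mul, abs_mul, abs_of_pos (pow_pos hρ0 _)]
                    exact mul_le_mul (ha j) (hinner j) (by positivity) (by positivity)
            · calc ρ ^ N * ⟪η, w⟫ ≤ ρ ^ N * |⟪η, w⟫| := by
                    exact mul_le_mul_of_nonneg_left (le_abs_self _) hρN.le
                _ ≤ ρ ^ N * (‖η‖ * ‖y‖) := by
                    apply mul_le_mul_of_nonneg_left _ hρN.le
                    calc |⟪η, w⟫| ≤ ‖η‖ * ‖w‖ := abs_real_inner_le_norm _ _
                      _ ≤ ‖η‖ * ‖y‖ := mul_le_mul_of_nonneg_left hwv (norm_nonneg _)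
        _ = (D * (ρ ^ N * ‖η‖)) * ‖y‖ := by
            rw [Finset.sum_const, Finset.card_univ, Fintype.card_fin, nsmul_eq_mul, hDdef]
            ring
    have hyle : ‖y‖ ≤ D * (ρ ^ N * ‖η‖) := by
      rcases eq_or_lt_of_le (norm_nonneg y) with h0 | h0
      · rw [← h0]; positivity
      · exact le_of_mul_le_mul_right hyy h0
    calc D⁻¹ * (ρ ^ N)⁻¹ * ‖y‖ ≤ D⁻¹ * (ρ ^ N)⁻¹ * (D * (ρ ^ N * ‖η‖)) := by
          apply mul_le_mul_of_nonneg_left hyle (by positivity)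
      _ = ‖η‖ := by field_simp
end
end

section
/- Let N ≥ 2, B ≥ 1 and K ≥ 1, and let γ : I → ℝ^d be C^N with sup_{s∈I} |γ^{(j)}(s)| ≤ B for 0 ≤ j ≤ N. Then there exists a constant C > 0, depending only on B, K, N and d, such that the following holds for every λ ≥ 2: if ξ ∈ ℝ^d satisfies |ξ| ≤ K λ, and s, σ₀ ∈ I satisfy |s − σ₀| ≤ K λ^{−1/N} and |⟨γ^{(j)}(σ₀), ξ⟩| ≤ K λ^{j/N} for all 1 ≤ j ≤ N−1, then |⟨γ^{(1)}(s), ξ⟩| ≤ C λ^{1/N}. -/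
open MeasureTheory Real
open scoped RealInnerProductSpace

noncomputable section

lemma myWithin {n : ℕ∞} {f : ℝ → ℝ} {s : Set ℝ} (hf : ContDiff ℝ n f)
    (hs : UniqueDiffOn ℝ s) {x : ℝ} (hx : x ∈ s) {j : ℕ} (hj : (j : ℕ∞) ≤ n) :
    iteratedDerivWithin j f s x = iteratedDeriv j f x := by
  rw [iteratedDerivWithin_eq_iteratedFDerivWithin, iteratedDeriv_eq_iteratedFDeriv]
  have h := (contDiff_iff_ftaylorSeries.mp hf).hasFTaylorSeriesUpToOn s
  have := h.eq_iteratedFDerivWithin_of_uniqueDiffOn (m := j) (by exact_mod_cast hj) hs hx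
  rw [← this]
  rfl

lemma aux1 {d : ℕ} (ξ : E d) {n : ℕ} {γ : ℝ → E d} (hγ : ContDiff ℝ (n : ℕ∞) γ)
    {j : ℕ} (hj : j ≤ n) (t : ℝ) :
    iteratedDeriv j (fun u => ⟪γ u, ξ⟫) t = ⟪iteratedDeriv j γ t, ξ⟫ := by
  have h : (fun u => ⟪γ u, ξ⟫) = (innerSL ℝ ξ) ∘ γ := by
    funext u; exact (real_inner_comm _ _).symm
  rw [h, iteratedDeriv_eq_iteratedFDeriv, iteratedDeriv_eq_iteratedFDeriv,
    ContinuousLinearMap.iteratedFDeriv_comp_left (innerSL ℝ ξ) (x := t) hγ.contDiffAt (by exact_mod_cast hj)]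
  simp [real_inner_comm, mul_comm]

lemma key (n : ℕ) (f : ℝ → ℝ) (a b M : ℝ) (hab : a < b)
    (hf : ContDiff ℝ ((n + 1 : ℕ) : ℕ∞) f)
    (hM : ∀ y ∈ Set.Icc a b, |iteratedDeriv (n + 1) f y| ≤ M) :
    |f b| ≤ (∑ j ∈ Finset.range (n + 1),
        |b - a| ^ j / (j.factorial : ℝ) * |iteratedDeriv j f a|)
      + M * |b - a| ^ (n + 1) / (n.factorial : ℝ) := by
  have hs : UniqueDiffOn ℝ (Set.Icc a b) := uniqueDiffOn_Icc hab
  have ha : a ∈ Set.Icc a b := Set.left_mem_Icc.2 hab.le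
  have hb : b ∈ Set.Icc a b := Set.right_mem_Icc.2 hab.le
  have hT := taylor_mean_remainder_bound (f := f) (a := a) (b := b) (x := b) (n := n)
    hab.le (hf.contDiffOn) hb (fun y hy => by
      rw [Real.norm_eq_abs, myWithin hf hs hy (le_refl _)]
      exact hM y hy)
  have hTeq : taylorWithinEval f n (Set.Icc a b) a b =
      ∑ j ∈ Finset.range (n + 1), ((j.factorial : ℝ)⁻¹ * (b - a) ^ j) • iteratedDeriv j f a := by
    rw [taylor_within_apply]
    refine Finset.sum_congr rfl fun j hj => ?_
    rw [myWithin hf hs ha (by exact_mod_cast (Finset.mem_range.mp hj).le)]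
  have habs : |b - a| = b - a := abs_of_nonneg (by linarith)
  calc |f b| = |(f b - taylorWithinEval f n (Set.Icc a b) a b)
        + taylorWithinEval f n (Set.Icc a b) a b| := by ring_nf
    _ ≤ |f b - taylorWithinEval f n (Set.Icc a b) a b|
        + |taylorWithinEval f n (Set.Icc a b) a b| := abs_add_le _ _
    _ ≤ M * |b - a| ^ (n + 1) / (n.factorial : ℝ)
        + ∑ j ∈ Finset.range (n + 1),
            |b - a| ^ j / (j.factorial : ℝ) * |iteratedDeriv j f a| := by
        gcongr
        · calc |f b - taylorWithinEval f n (Set.Icc a b) a b| ≤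
              M * (b - a) ^ (n + 1) / (n.factorial : ℝ) := hT
            _ = M * |b - a| ^ (n + 1) / (n.factorial : ℝ) := by rw [habs]
        · rw [hTeq]
          refine (Finset.abs_sum_le_sum_abs _ _).trans ?_
          refine Finset.sum_le_sum fun j _ => ?_
          rw [smul_eq_mul, abs_mul, abs_mul, abs_inv, abs_pow, habs]
          rw [Nat.abs_cast]
          exact le_of_eq (by ring)
    _ = _ := by ring

theorem stmt17 (d N : ℕ) (hN : 2 ≤ N) (B K : ℝ) (hB : 1 ≤ B) (hK : 1 ≤ K)
    (γ : ℝ → E d) (hγ : ContDiff ℝ ((N : ℕ) : ℕ∞) γ)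
    (hγB : ∀ j ≤ N, ∀ s ∈ segI, ‖iteratedDeriv j γ s‖ ≤ B) :
    ∃ C > 0, ∀ lam : ℝ, 2 ≤ lam →
      ∀ ξ : E d, ‖ξ‖ ≤ K * lam →
      ∀ s ∈ segI, ∀ σ₀ ∈ segI,
        |s - σ₀| ≤ K * lam ^ (-(1 : ℝ) / (N : ℝ)) →
        (∀ j : ℕ, 1 ≤ j → j ≤ N - 1 →
          |⟪iteratedDeriv j γ σ₀, ξ⟫| ≤ K * lam ^ ((j : ℝ) / (N : ℝ))) →
        |⟪iteratedDeriv 1 γ s, ξ⟫| ≤ C * lam ^ ((1 : ℝ) / (N : ℝ)) := by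
  obtain ⟨n, rfl⟩ : ∃ n, N = n + 2 := ⟨N - 2, by omega⟩
  set N := n + 2 with hNdef
  have hK0 : (0:ℝ) < K := by linarith
  have hB0 : (0:ℝ) < B := by linarith
  refine ⟨((N : ℝ) + 1) * B * K ^ (N + 1), by positivity, ?_⟩
  intro lam hlam ξ hξ s hs σ₀ hσ₀ hdist hjhyp
  have hlam0 : (0:ℝ) < lam := by linarith
  set p := lam ^ ((1:ℝ) / (N:ℝ)) with hp_def
  set q := lam ^ (-(1:ℝ) / (N:ℝ)) with hq_def
  have hp0 : 0 < p := Real.rpow_pos_of_pos hlam0 _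
  have hq0 : 0 < q := Real.rpow_pos_of_pos hlam0 _
  have hNR : ((N:ℝ)) ≠ 0 := by positivity
  -- the scalar function
  set f : ℝ → ℝ := fun t => ⟪deriv γ t, ξ⟫ with hf_def
  -- deriv γ is C^{n+1}
  have hγ' : ContDiff ℝ ((n + 1 : ℕ) : ℕ∞) (deriv γ) := by
    have h2 : ContDiff ℝ (((n + 1 : ℕ) : WithTop ℕ∞) + 1) γ := by exact_mod_cast hγ
    exact_mod_cast (contDiff_succ_iff_deriv.mp h2).2.2
  have hf : ContDiff ℝ ((n + 1 : ℕ) : ℕ∞) f := by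
    exact ContDiff.inner ℝ hγ' contDiff_const
  -- derivatives of f
  have hfd : ∀ j ≤ n + 1, ∀ t : ℝ, iteratedDeriv j f t = ⟪iteratedDeriv (j + 1) γ t, ξ⟫ := by
    intro j hj t
    rw [show f = (fun u => ⟪(deriv γ) u, ξ⟫) from rfl, aux1 ξ hγ' hj t,
      show iteratedDeriv j (deriv γ) t = iteratedDeriv (j+1) γ t from
        congrFun (iteratedDeriv_succ' (n := j) (f := γ)).symm t]
  -- goal in terms of f
  have hgoal : |⟪iteratedDeriv 1 γ s, ξ⟫| = |f s| := by
    rw [iteratedDeriv_one]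
  rw [hgoal]
  -- bound on (n+1)-st derivative of f  (M := B * (K * lam))
  set M : ℝ := B * (K * lam) with hM_def
  have hfM : ∀ y ∈ segI, |iteratedDeriv (n + 1) f y| ≤ M := by
    intro y hy
    rw [hfd (n+1) le_rfl y]
    calc |⟪iteratedDeriv (n + 2) γ y, ξ⟫| ≤ ‖iteratedDeriv (n + 2) γ y‖ * ‖ξ‖ :=
        abs_real_inner_le_norm _ _
      _ ≤ B * (K * lam) := by
        apply mul_le_mul (hγB (n+2) le_rfl y hy) hξ (norm_nonneg _) hB0.le
  -- the key Taylor bound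
  have hkey : |f s| ≤ (∑ j ∈ Finset.range (n + 1),
        |s - σ₀| ^ j / (j.factorial : ℝ) * |iteratedDeriv j f σ₀|)
      + M * |s - σ₀| ^ (n + 1) / (n.factorial : ℝ) := by
    rcases lt_trichotomy σ₀ s with hlt | heq | hgt
    · have := key n f σ₀ s M hlt hf (fun y hy => hfM y
        (Set.Icc_subset_Icc hσ₀.1 hs.2 hy))
      exact this
    · have hM0 : (0:ℝ) ≤ M := by rw [hM_def]; positivity
      have h0 : |f s| = |s - σ₀| ^ 0 / ((Nat.factorial 0 : ℕ) : ℝ) * |iteratedDeriv 0 f σ₀| := by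
        simp [iteratedDeriv_zero, heq]
      rw [h0]
      have hle := Finset.single_le_sum
        (f := fun j => |s - σ₀| ^ j / (j.factorial : ℝ) * |iteratedDeriv j f σ₀|)
        (fun j _ => by positivity) (Finset.mem_range.mpr (Nat.succ_pos n))
      have hrem0 : 0 ≤ M * |s - σ₀| ^ (n + 1) / (n.factorial : ℝ) :=
        div_nonneg (mul_nonneg hM0 (by positivity)) (by positivity)
      linarith
    · -- reflect
      set fr : ℝ → ℝ := fun t => f (-t) with hfr_def
      have hfr : ContDiff ℝ ((n + 1 : ℕ) : ℕ∞) fr := hf.comp (contDiff_id.neg)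
      have hrefl := key n fr (-σ₀) (-s) M (by linarith) hfr (fun y hy => by
        rw [show iteratedDeriv (n+1) fr y = ((-1:ℝ))^(n+1) • iteratedDeriv (n+1) f (-y) from
          iteratedDeriv_comp_neg (n+1) f y]
        rw [smul_eq_mul, abs_mul, abs_pow, abs_neg, abs_one, one_pow, one_mul]
        refine hfM (-y) ?_
        constructor
        · have := hy.2; have := hs.1; simp only [Set.mem_Icc] at *; linarith
        · have := hy.1; have := hσ₀.2; simp only [Set.mem_Icc] at *; linarith)
      have hfrs : fr (-s) = f s := by simp [hfr_def]
      have habs2 : |(-s) - (-σ₀)| = |s - σ₀| := by rw [abs_sub_comm]; ring_nf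
      rw [hfrs, habs2] at hrefl
      refine hrefl.trans (le_of_eq ?_)
      congr 1
      refine Finset.sum_congr rfl fun j _ => ?_
      rw [show iteratedDeriv j fr (-σ₀) = ((-1:ℝ))^j • iteratedDeriv j f (-(-σ₀)) from
        iteratedDeriv_comp_neg j f (-σ₀)]
      rw [neg_neg, smul_eq_mul, abs_mul, abs_pow, abs_neg, abs_one, one_pow, one_mul]
  -- estimate each term
  have hterm : ∀ j ∈ Finset.range (n + 1),
      |s - σ₀| ^ j / (j.factorial : ℝ) * |iteratedDeriv j f σ₀| ≤ K ^ N * p := by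
    intro j hj
    have hjn : j ≤ n := Nat.lt_succ_iff.mp (Finset.mem_range.mp hj)
    have hD : |iteratedDeriv j f σ₀| ≤ K * lam ^ (((j:ℝ) + 1) / (N:ℝ)) := by
      rw [hfd j (by omega) σ₀]
      have := hjhyp (j + 1) (by omega) (by omega)
      convert this using 3
      push_cast; ring
    have h1 : |s - σ₀| ^ j / (j.factorial : ℝ) ≤ (K * q) ^ j := by
      calc |s - σ₀| ^ j / (j.factorial : ℝ) ≤ |s - σ₀| ^ j := by
            apply div_le_self (by positivity)
            exact_mod_cast j.factorial_pos
        _ ≤ (K * q) ^ j := pow_le_pow_left₀ (abs_nonneg _) hdist j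
    calc |s - σ₀| ^ j / (j.factorial : ℝ) * |iteratedDeriv j f σ₀|
        ≤ (K * q) ^ j * (K * lam ^ (((j:ℝ) + 1) / (N:ℝ))) := by
          apply mul_le_mul h1 hD (abs_nonneg _) (by positivity)
      _ = K ^ (j + 1) * (q ^ j * lam ^ (((j:ℝ) + 1) / (N:ℝ))) := by
          rw [mul_pow]; ring
      _ = K ^ (j + 1) * p := by
          congr 1
          rw [hq_def, ← Real.rpow_natCast (lam ^ (-(1:ℝ)/(N:ℝ))) j,
            ← Real.rpow_mul hlam0.le, ← Real.rpow_add hlam0, hp_def]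
          congr 1
          field_simp
          ring
      _ ≤ K ^ N * p :=
          mul_le_mul_of_nonneg_right (pow_le_pow_right₀ hK (by omega)) hp0.le
  -- remainder bound
  have hrem : M * |s - σ₀| ^ (n + 1) / (n.factorial : ℝ) ≤ B * K ^ N * p := by
    have h1 : M * |s - σ₀| ^ (n + 1) / (n.factorial : ℝ) ≤ M * (K * q) ^ (n + 1) := by
      calc M * |s - σ₀| ^ (n + 1) / (n.factorial : ℝ) ≤ M * |s - σ₀| ^ (n + 1) := by
            apply div_le_self (by positivity)
            exact_mod_cast n.factorial_pos
        _ ≤ M * (K * q) ^ (n + 1) := by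
            apply mul_le_mul_of_nonneg_left (pow_le_pow_left₀ (abs_nonneg _) hdist _)
              (by positivity)
    refine h1.trans (le_of_eq ?_)
    have h2 : lam * q ^ (n + 1) = p := by
      rw [hq_def, ← Real.rpow_natCast (lam ^ (-(1:ℝ)/(N:ℝ))) (n+1),
        ← Real.rpow_mul hlam0.le]
      nth_rewrite 1 [← Real.rpow_one lam]
      rw [← Real.rpow_add hlam0, hp_def]
      congr 1
      have : ((N:ℝ)) = (n:ℝ) + 2 := by push_cast [hNdef]; ring
      rw [this]
      have h3 : (n:ℝ) + 2 ≠ 0 := by positivity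
      field_simp
      push_cast
      ring
    calc M * (K * q) ^ (n + 1) = B * K ^ (n + 2) * (lam * q ^ (n + 1)) := by
          rw [hM_def, mul_pow]; ring
      _ = B * K ^ N * p := by rw [h2]
  -- combine
  have hsum : (∑ j ∈ Finset.range (n + 1),
      |s - σ₀| ^ j / (j.factorial : ℝ) * |iteratedDeriv j f σ₀|) ≤ ((n:ℝ) + 1) * (K ^ N * p) := by
    calc (∑ j ∈ Finset.range (n + 1),
        |s - σ₀| ^ j / (j.factorial : ℝ) * |iteratedDeriv j f σ₀|)
        ≤ ∑ _j ∈ Finset.range (n + 1), K ^ N * p := Finset.sum_le_sum hterm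
      _ = ((n:ℝ) + 1) * (K ^ N * p) := by
          rw [Finset.sum_const, Finset.card_range, nsmul_eq_mul]
          push_cast; ring
  have hKN1 : (1:ℝ) ≤ K ^ N := one_le_pow₀ hK
  have hKNsucc : K ^ N ≤ K ^ (N + 1) := pow_le_pow_right₀ hK (by omega)
  calc |f s| ≤ ((n:ℝ) + 1) * (K ^ N * p) + B * K ^ N * p := by
        refine hkey.trans ?_
        exact add_le_add hsum hrem
    _ ≤ ((N : ℝ) + 1) * B * K ^ (N + 1) * p := by
        have hNcast : ((N:ℝ)) = (n:ℝ) + 2 := by push_cast [hNdef]; ring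
        rw [hNcast]
        have h1 : K ^ N * p ≤ K ^ (N+1) * p := mul_le_mul_of_nonneg_right hKNsucc hp0.le
        have hn0 : (0:ℝ) ≤ (n:ℝ) := Nat.cast_nonneg n
        have hA' : (0:ℝ) ≤ K ^ (N+1) * p := by positivity
        nlinarith [h1, hn0, hA', hB, hB0.le,
          mul_nonneg hn0 (sub_nonneg.2 h1),
          mul_nonneg (by linarith : (0:ℝ) ≤ B - 1) hA',
          mul_nonneg hn0 (mul_nonneg (by linarith : (0:ℝ) ≤ B - 1) hA'),
          mul_nonneg hB0.le (sub_nonneg.2 h1),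
          mul_nonneg hB0.le hA']
end
end

section
/- Let γ : I → ℝ^d be a smooth non-degenerate curve and let 1 ≤ p < ∞. Then there exist c > 0 and δ₀ ∈ (0, 1/2], depending only on d, p and γ, such that for every δ ∈ (0, δ₀) there exists a non-zero, non-negative g ∈ L^p(ℝ^{d+1}) with ‖N_δ^γ g‖_{L^p(ℝ^d)} ≥ c δ^{1 − 2/p} ‖g‖_{L^p(ℝ^{d+1})}. In particular, for 1 ≤ p < 2 the L^p(ℝ^{d+1}) → L^p(ℝ^d) operator norm of N_δ^γ grows at least like δ^{1−2/p} as δ → 0. -/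
open MeasureTheory Real
open scoped RealInnerProductSpace ENNReal
open Metric Set

noncomputable section

def Tube {d : ℕ} (γ : ℝ → E d) (δ : ℝ) (s : ℝ) : Set (E d × ℝ) :=
  {p | ‖p.1 - p.2 • γ s‖ ≤ δ ∧ p.2 ∈ segI}

def Avg {d : ℕ} (γ : ℝ → E d) (δ : ℝ) (g : E d × ℝ → ℝ) (x : E d) (s : ℝ) : ℝ :=
  ((volume (Tube γ δ s)).toReal)⁻¹ * ∫ p in Tube γ δ s, g (x - p.1, p.2)

def Nik {d : ℕ} (γ : ℝ → E d) (δ : ℝ) (g : E d × ℝ → ℝ) (x : E d) : ℝ :=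
  ⨆ s : segI, |Avg γ δ g x (s : ℝ)|

lemma coord_abs_le_norm {d : ℕ} (v : E d) (i : Fin d) : |v i| ≤ ‖v‖ := by
  rw [EuclideanSpace.norm_eq]
  rw [← Real.sqrt_sq_eq_abs]
  apply Real.sqrt_le_sqrt
  have := Finset.single_le_sum (f := fun j => v j ^ 2)
    (fun j _ => sq_nonneg _) (Finset.mem_univ i)
  simpa [Real.norm_eq_abs, sq_abs] using this

lemma shear_meas {d : ℕ} (v : E d) (δ a b : ℝ) :
    MeasurableSet {p : E d × ℝ | ‖p.1 - p.2 • v‖ ≤ δ ∧ p.2 ∈ Set.Icc a b} := by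
  have h1 : Continuous fun p : E d × ℝ => ‖p.1 - p.2 • v‖ :=
    (continuous_fst.sub (continuous_snd.smul continuous_const)).norm
  exact ((isClosed_le h1 continuous_const).inter
    (isClosed_Icc.preimage continuous_snd)).measurableSet

lemma shear_vol {d : ℕ} (v : E d) (δ : ℝ) (a b : ℝ) :
    volume {p : E d × ℝ | ‖p.1 - p.2 • v‖ ≤ δ ∧ p.2 ∈ Set.Icc a b}
      = volume (Metric.closedBall (0 : E d) δ) * ENNReal.ofReal (b - a) := by
  rw [Measure.volume_eq_prod, Measure.prod_apply_symm (shear_meas v δ a b)]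
  have hsec : ∀ t : ℝ, volume ((fun x => (x, t)) ⁻¹'
      {p : E d × ℝ | ‖p.1 - p.2 • v‖ ≤ δ ∧ p.2 ∈ Set.Icc a b})
      = Set.indicator (Set.Icc a b) (fun _ => volume (Metric.closedBall (0 : E d) δ)) t := by
    intro t
    by_cases ht : t ∈ Set.Icc a b
    · have : ((fun x => (x, t)) ⁻¹'
          {p : E d × ℝ | ‖p.1 - p.2 • v‖ ≤ δ ∧ p.2 ∈ Set.Icc a b})
          = Metric.closedBall (t • v) δ := by
        ext x
        simp only [Set.mem_preimage, Set.mem_setOf_eq, Metric.mem_closedBall, dist_eq_norm]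
        exact ⟨fun h => h.1, fun h => ⟨h, ht⟩⟩
      rw [this, Set.indicator_of_mem ht, Measure.addHaar_closedBall_center]
    · have : ((fun x => (x, t)) ⁻¹'
          {p : E d × ℝ | ‖p.1 - p.2 • v‖ ≤ δ ∧ p.2 ∈ Set.Icc a b}) = ∅ := by
        ext x; simp only [Set.mem_preimage, Set.mem_setOf_eq, Set.mem_empty_iff_false, iff_false]
        exact fun h => ht h.2
      rw [this, Set.indicator_of_notMem ht]; simp
  rw [lintegral_congr hsec, lintegral_indicator measurableSet_Icc]
  rw [setLIntegral_const, Real.volume_Icc]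

lemma exists_good_interval {d : ℕ} (hd : 0 < d) (γ : ℝ → E d) (hγ : ContDiff ℝ (⊤ : ℕ∞) γ)
    (hnd : ∀ s ∈ segI,
      (Matrix.of fun i j : Fin d => iteratedDeriv ((j : ℕ) + 1) γ s i).det ≠ 0) :
    ∃ m > 0, ∃ η > 0, η ≤ 1 ∧
      ∀ s ∈ Set.Icc (0:ℝ) η, ∀ s' ∈ Set.Icc (0:ℝ) η, s ≤ s' →
        m * (s' - s) ≤ ‖γ s' - γ s‖ := by
  have h0 : (0:ℝ) ∈ segI := by constructor <;> norm_num
  have hderiv0 : deriv γ 0 ≠ 0 := by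
    intro h
    apply hnd 0 h0
    apply Matrix.det_eq_zero_of_column_eq_zero ⟨0, hd⟩
    intro i
    simp only [Matrix.of_apply]
    show iteratedDeriv (0 + 1) γ 0 i = 0
    norm_num [iteratedDeriv_one, h]
  obtain ⟨i, hi⟩ : ∃ i, deriv γ 0 i ≠ 0 := by
    by_contra hcon
    push_neg at hcon
    exact hderiv0 (PiLp.ext hcon)
  set val := deriv γ 0 i with hvaldef
  set m : ℝ := |val| / 2 with hmdef
  have hm : 0 < m := by positivity
  have hdiff : Differentiable ℝ γ := hγ.differentiable (by simp)
  have hf' : ∀ s : ℝ, HasDerivAt (fun s => γ s i) (deriv γ s i) s := by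
    intro s
    have h1 : HasDerivAt γ (deriv γ s) s := (hdiff s).hasDerivAt
    have h2 := (EuclideanSpace.proj (𝕜 := ℝ) i).hasFDerivAt.comp_hasDerivAt s h1
    exact h2
  have hcont : Continuous fun s => deriv γ s i :=
    ((EuclideanSpace.proj (𝕜 := ℝ) i).continuous).comp
      (hγ.continuous_deriv (by exact_mod_cast le_top))
  obtain ⟨η', hη', hclose⟩ :=
    Metric.continuousAt_iff.1 (hcont.continuousAt (x := 0)) m hm
  set η : ℝ := min (η' / 2) 1 with hηdef
  have hηpos : 0 < η := lt_min (by linarith) one_pos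
  have hη1 : η ≤ 1 := min_le_right _ _
  refine ⟨m, hm, η, hηpos, hη1, ?_⟩
  have hIcc : ∀ s ∈ Set.Icc (0:ℝ) η, dist s 0 < η' := by
    intro s hs
    rw [Real.dist_eq, sub_zero, abs_of_nonneg hs.1]
    calc s ≤ η := hs.2
    _ ≤ η' / 2 := min_le_left _ _
    _ < η' := by linarith
  intro s hs s' hs' hss'
  have key : m * (s' - s) ≤ |γ s' i - γ s i| := by
    rcases lt_or_gt_of_ne hi with hneg | hpos
    · have hge : ∀ u ∈ interior (Set.Icc (0:ℝ) η), m ≤ deriv (fun s => -(γ s i)) u := by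
        intro u hu
        have hu' : u ∈ Set.Icc (0:ℝ) η := interior_subset hu
        have := hclose (hIcc u hu')
        rw [Real.dist_eq] at this
        have habs : |val| = -val := abs_of_neg hneg
        have hderiv_eq : deriv (fun s => -(γ s i)) u = -(deriv γ u i) := by
          rw [deriv.fun_neg]
          congr 1
          exact (hf' u).deriv
        rw [hderiv_eq]
        nlinarith [abs_nonneg (deriv γ u i - val), le_abs_self (deriv γ u i - val)]
      have := (convex_Icc (0:ℝ) η).mul_sub_le_image_sub_of_le_deriv
        (f := fun s => -(γ s i))
        (((((EuclideanSpace.proj (𝕜 := ℝ) i).continuous).comp hγ.continuous).neg).continuousOn)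
        (fun u _ => ((hf' u).neg).differentiableAt.differentiableWithinAt) hge s hs s' hs' hss'
      calc m * (s' - s) ≤ -(γ s' i) - -(γ s i) := this
      _ = -(γ s' i - γ s i) := by ring
      _ ≤ |γ s' i - γ s i| := neg_le_abs _
    · have hge : ∀ u ∈ interior (Set.Icc (0:ℝ) η), m ≤ deriv (fun s => γ s i) u := by
        intro u hu
        have hu' : u ∈ Set.Icc (0:ℝ) η := interior_subset hu
        have h2 : |deriv γ u i - val| < m := by
          have := hclose (hIcc u hu')
          rwa [Real.dist_eq] at this
        have hderiv_eq : deriv (fun s => γ s i) u = deriv γ u i := (hf' u).deriv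
        rw [hderiv_eq]
        have habs : |val| = val := abs_of_pos hpos
        nlinarith [neg_abs_le (deriv γ u i - val)]
      have := (convex_Icc (0:ℝ) η).mul_sub_le_image_sub_of_le_deriv
        (f := fun s => γ s i)
        ((((EuclideanSpace.proj (𝕜 := ℝ) i).continuous).comp hγ.continuous).continuousOn)
        (fun u _ => (hf' u).differentiableAt.differentiableWithinAt) hge s hs s' hs' hss'
      calc m * (s' - s) ≤ γ s' i - γ s i := this
      _ ≤ |γ s' i - γ s i| := le_abs_self _
  calc m * (s' - s) ≤ |γ s' i - γ s i| := key
  _ = |(γ s' - γ s) i| := by norm_num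
  _ ≤ ‖γ s' - γ s‖ := coord_abs_le_norm _ _

set_option maxHeartbeats 2000000 in
theorem stmt18 (d : ℕ) (hd : 1 ≤ d) (γ : ℝ → E d) (hγ : ContDiff ℝ (⊤ : ℕ∞) γ)
    (hnd : ∀ s ∈ segI,
      (Matrix.of fun i j : Fin d => iteratedDeriv ((j : ℕ) + 1) γ s i).det ≠ 0)
    (p : ℝ) (hp : 1 ≤ p) :
    ∃ c > 0, ∃ δ₀ : ℝ, 0 < δ₀ ∧ δ₀ ≤ 1 / 2 ∧
      ∀ δ : ℝ, 0 < δ → δ < δ₀ →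
        ∃ g : E d × ℝ → ℝ, MemLp g (ENNReal.ofReal p) volume ∧
          eLpNorm g (ENNReal.ofReal p) volume ≠ 0 ∧ (∀ q, 0 ≤ g q) ∧
          ENNReal.ofReal (c * δ ^ (1 - 2 / p)) * eLpNorm g (ENNReal.ofReal p) volume
            ≤ eLpNorm (Nik γ δ g) (ENNReal.ofReal p) volume := by
  classical
  obtain ⟨m, hm, η, hη, hη1, hsep⟩ := exists_good_interval hd γ hγ hnd
  obtain ⟨K, hK⟩ := (isCompact_Icc (a := (-1:ℝ)) (b := 1)).exists_bound_of_continuousOn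
    (hγ.continuous.continuousOn)
  set M : ℝ := max 1 K with hMdef
  have hM1 : (1:ℝ) ≤ M := le_max_left _ _
  have hM0 : (0:ℝ) < M := lt_of_lt_of_le one_pos hM1
  have hγM : ∀ s ∈ segI, ‖γ s‖ ≤ M := fun s hs => (hK s hs).trans (le_max_right _ _)
  have hp0 : (0:ℝ) < p := lt_of_lt_of_le one_pos hp
  set P : ℝ≥0∞ := ENNReal.ofReal p with hPdef
  have hP0 : P ≠ 0 := by
    rw [hPdef, Ne, ENNReal.ofReal_eq_zero, not_le]; linarith
  have hPtop : P ≠ ⊤ := ENNReal.ofReal_ne_top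
  have hPto : P.toReal = p := ENNReal.toReal_ofReal (by linarith)
  have hA0 : (0:ℝ) < 2 * 3^d / M := by positivity
  have hB0 : (0:ℝ) < η * m / 8 := by positivity
  set c : ℝ := (1/M) * ((η * m / 8) / (2 * 3^d / M)) ^ (1/p) with hcdef
  have hc : 0 < c :=
    mul_pos (by positivity) (Real.rpow_pos_of_pos (div_pos hB0 hA0) _)
  refine ⟨c, hc, 1/2, by norm_num, le_refl _, ?_⟩
  intro δ hδ hδ2
  set V : ℝ≥0∞ := volume (Metric.closedBall (0 : E d) δ) with hVdef
  set V₁ : ℝ≥0∞ := volume (Metric.ball (0 : E d) 1) with hV₁def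
  have hfr : Module.finrank ℝ (E d) = d := finrank_euclideanSpace_fin
  have hVval : V = ENNReal.ofReal (δ ^ d) * V₁ := by
    rw [hVdef, Measure.addHaar_closedBall _ _ hδ.le, hfr]
  have hV₁pos : (0:ℝ≥0∞) < V₁ := measure_ball_pos _ _ one_pos
  have hV₁top : V₁ < ⊤ := measure_ball_lt_top
  have hVpos : (0:ℝ≥0∞) < V :=
    lt_of_lt_of_le (measure_ball_pos _ _ hδ) (measure_mono Metric.ball_subset_closedBall)
  have hVtop : V < ⊤ := measure_closedBall_lt_top
  have hvr : 0 < V.toReal := ENNReal.toReal_pos hVpos.ne' hVtop.ne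
  have hTube : ∀ s : ℝ, volume (Tube γ δ s) = V * ENNReal.ofReal 2 := by
    intro s
    have he : Tube γ δ s = {p : E d × ℝ | ‖p.1 - p.2 • γ s‖ ≤ δ ∧ p.2 ∈ Set.Icc (-1:ℝ) 1} := rfl
    rw [he, shear_vol]
    norm_num
    rfl
  have hδM : δ/M ≤ 2⁻¹ := le_trans (div_le_self hδ.le hM1) (by linarith)
  have hδM0 : 0 < δ/M := div_pos hδ hM0
  have hJsub : Set.Icc (2⁻¹ - δ/M) (2⁻¹ + δ/M) ⊆ segI := by
    intro t ht
    constructor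
    · linarith [ht.1, hδM0.le]
    · linarith [ht.2]
  set Sg : Set (E d × ℝ) := (Metric.closedBall (0:E d) (3*δ)) ×ˢ
    (Set.Icc (2⁻¹ - δ/M) (2⁻¹ + δ/M)) with hSgdef
  have hSgmeas : MeasurableSet Sg := measurableSet_closedBall.prod measurableSet_Icc
  have hSgvol : volume Sg = ENNReal.ofReal ((3*δ)^d) * V₁ * ENNReal.ofReal (2*(δ/M)) := by
    rw [hSgdef, Measure.volume_eq_prod, Measure.prod_prod,
      Measure.addHaar_closedBall _ _ (by positivity), hfr, Real.volume_Icc, ← hV₁def]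
    congr 1
    congr 1
    ring
  have hSgvol_top : volume Sg ≠ ⊤ := by
    rw [hSgvol]
    exact ENNReal.mul_ne_top (ENNReal.mul_ne_top ENNReal.ofReal_ne_top hV₁top.ne)
      ENNReal.ofReal_ne_top
  have hSgvol_pos : volume Sg ≠ 0 := by
    rw [hSgvol]
    refine mul_ne_zero (mul_ne_zero ?_ hV₁pos.ne') ?_
    · exact (ENNReal.ofReal_pos.2 (by positivity)).ne'
    · exact (ENNReal.ofReal_pos.2 (by positivity)).ne'
  set g : E d × ℝ → ℝ := Sg.indicator (fun _ => (1:ℝ)) with hgdef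
  have hgnn : ∀ q, 0 ≤ g q := fun q => Set.indicator_nonneg (fun _ _ => zero_le_one) q
  have hpre : ∀ x : E d, (fun p : E d × ℝ => (x - p.1, p.2)) ⁻¹' Sg
      = (Metric.closedBall x (3*δ)) ×ˢ (Set.Icc (2⁻¹ - δ/M) (2⁻¹ + δ/M)) := by
    intro x; ext q
    simp only [Set.mem_preimage, hSgdef, Set.mem_prod, Metric.mem_closedBall,
      dist_eq_norm, sub_zero]
    rw [norm_sub_rev (q.1) x]
  have hgcomp : ∀ x : E d, (fun p : E d × ℝ => g (x - p.1, p.2))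
      = ((Metric.closedBall x (3*δ)) ×ˢ (Set.Icc (2⁻¹ - δ/M) (2⁻¹ + δ/M))).indicator
        (fun _ => (1:ℝ)) := by
    intro x; funext q
    rw [← hpre x]
    by_cases hq : (x - q.1, q.2) ∈ Sg
    · rw [hgdef]
      rw [Set.indicator_of_mem hq, Set.indicator_of_mem (by exact hq)]
    · rw [hgdef]
      rw [Set.indicator_of_notMem hq, Set.indicator_of_notMem (by exact hq)]
  have hGlob : ∀ x : E d, Integrable (fun p : E d × ℝ => g (x - p.1, p.2)) volume := by
    intro x
    rw [hgcomp x]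
    refine (integrable_indicator_iff (measurableSet_closedBall.prod measurableSet_Icc)).2 ?_
    refine integrableOn_const (ne_of_lt ?_)
    rw [Measure.volume_eq_prod, Measure.prod_prod, Real.volume_Icc]
    exact ENNReal.mul_lt_top measure_closedBall_lt_top ENNReal.ofReal_lt_top
  have hAvg_lb : ∀ s0 ∈ Set.Icc (0:ℝ) η, ∀ x ∈ Metric.closedBall ((2⁻¹:ℝ) • γ s0) δ,
      δ/M ≤ Avg γ δ g x s0 := by
    intro s0 hs0 x hx
    have hs0seg : s0 ∈ segI := ⟨by linarith [hs0.1], le_trans hs0.2 hη1⟩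
    set Sub : Set (E d × ℝ) :=
      {p : E d × ℝ | ‖p.1 - p.2 • γ s0‖ ≤ δ ∧ p.2 ∈ Set.Icc (2⁻¹ - δ/M) (2⁻¹ + δ/M)}
      with hSubdef
    have hSubmeas : MeasurableSet Sub := shear_meas (γ s0) δ _ _
    have hSubTube : Sub ⊆ Tube γ δ s0 := fun q hq => ⟨hq.1, hJsub hq.2⟩
    have hSubvol : volume Sub = V * ENNReal.ofReal (2*(δ/M)) := by
      rw [hSubdef, shear_vol]
      rw [← hVdef]
      congr 1
      ring
    have hgone : ∀ q ∈ Sub, g (x - q.1, q.2) = 1 := by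
      intro q hq
      have h1 : ‖x - (2⁻¹:ℝ) • γ s0‖ ≤ δ := by
        rw [← mem_closedBall_iff_norm]; exact hx
      have h2 : ‖((2⁻¹:ℝ) - q.2) • γ s0‖ ≤ δ := by
        rw [norm_smul]
        have habs : |(2⁻¹:ℝ) - q.2| ≤ δ/M := by
          rcases hq.2 with ⟨hl, hr⟩
          rw [abs_le]
          constructor <;> linarith
        calc ‖(2⁻¹:ℝ) - q.2‖ * ‖γ s0‖ ≤ (δ/M) * M := by
              apply mul_le_mul _ (hγM s0 hs0seg) (norm_nonneg _) hδM0.le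
              rwa [Real.norm_eq_abs]
        _ = δ := div_mul_cancel₀ _ hM0.ne'
      have h3 : ‖q.2 • γ s0 - q.1‖ ≤ δ := by rw [norm_sub_rev]; exact hq.1
      have hxq : ‖x - q.1‖ ≤ 3*δ := by
        have hdec : x - q.1 = (x - (2⁻¹:ℝ) • γ s0) +
            (((2⁻¹:ℝ) - q.2) • γ s0 + (q.2 • γ s0 - q.1)) := by
          rw [sub_smul]; abel
        rw [hdec]
        calc ‖(x - (2⁻¹:ℝ) • γ s0) + (((2⁻¹:ℝ) - q.2) • γ s0 + (q.2 • γ s0 - q.1))‖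
            ≤ ‖x - (2⁻¹:ℝ) • γ s0‖ + ‖((2⁻¹:ℝ) - q.2) • γ s0 + (q.2 • γ s0 - q.1)‖ :=
              norm_add_le _ _
        _ ≤ ‖x - (2⁻¹:ℝ) • γ s0‖ + (‖((2⁻¹:ℝ) - q.2) • γ s0‖ + ‖q.2 • γ s0 - q.1‖) := by
              linarith [norm_add_le (((2⁻¹:ℝ) - q.2) • γ s0) (q.2 • γ s0 - q.1)]
        _ ≤ 3*δ := by linarith
      have hmem : (x - q.1, q.2) ∈ Sg := by
        rw [hSgdef]
        exact ⟨by rwa [Metric.mem_closedBall, dist_zero_right], hq.2⟩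
      rw [hgdef]
      exact Set.indicator_of_mem hmem _
    have hint : IntegrableOn (fun p : E d × ℝ => g (x - p.1, p.2)) (Tube γ δ s0) volume :=
      (hGlob x).integrableOn
    have hI1 : (volume Sub).toReal ≤ ∫ p in Tube γ δ s0, g (x - p.1, p.2) := by
      have e1 : ∫ p in Sub, g (x - p.1, p.2) = (volume Sub).toReal := by
        rw [setIntegral_congr_fun hSubmeas hgone]
        simp [setIntegral_const, measureReal_def]
      rw [← e1]
      apply setIntegral_mono_set hint
      · exact Filter.Eventually.of_forall (fun q => hgnn _)
      · exact HasSubset.Subset.eventuallyLE hSubTube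
    have hTubeToReal : (volume (Tube γ δ s0)).toReal = V.toReal * 2 := by
      rw [hTube s0, ENNReal.toReal_mul, ENNReal.toReal_ofReal (by norm_num)]
    have hSubToReal : (volume Sub).toReal = V.toReal * (2*(δ/M)) := by
      rw [hSubvol, ENNReal.toReal_mul, ENNReal.toReal_ofReal (by positivity)]
    show δ/M ≤ ((volume (Tube γ δ s0)).toReal)⁻¹ * ∫ p in Tube γ δ s0, g (x - p.1, p.2)
    rw [hTubeToReal]
    calc δ/M = (V.toReal * 2)⁻¹ * (V.toReal * (2*(δ/M))) := by
          field_simp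
    _ ≤ (V.toReal * 2)⁻¹ * ∫ p in Tube γ δ s0, g (x - p.1, p.2) := by
          apply mul_le_mul_of_nonneg_left _ (by positivity)
          rw [← hSubToReal]; exact hI1
  have hNik_bdd : ∀ x : E d, BddAbove (Set.range fun s : segI => |Avg γ δ g x (s:ℝ)|) := by
    intro x
    refine ⟨(V.toReal * 2)⁻¹ * ∫ p : E d × ℝ, g (x - p.1, p.2), ?_⟩
    rintro y ⟨s, rfl⟩
    have hTR : (volume (Tube γ δ (s:ℝ))).toReal = V.toReal * 2 := by
      rw [hTube, ENNReal.toReal_mul, ENNReal.toReal_ofReal (by norm_num)]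
    have hTmeas : MeasurableSet (Tube γ δ (s:ℝ)) := shear_meas (γ (s:ℝ)) δ _ _
    have hnn : 0 ≤ ∫ p in Tube γ δ (s:ℝ), g (x - p.1, p.2) :=
      setIntegral_nonneg hTmeas (fun q _ => hgnn _)
    show |((volume (Tube γ δ (s:ℝ))).toReal)⁻¹ * ∫ p in Tube γ δ (s:ℝ), g (x - p.1, p.2)|
      ≤ (V.toReal * 2)⁻¹ * ∫ p : E d × ℝ, g (x - p.1, p.2)
    rw [hTR, abs_mul, abs_of_nonneg (by positivity), abs_of_nonneg hnn]
    apply mul_le_mul_of_nonneg_left _ (by positivity)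
    exact setIntegral_le_integral (hGlob x) (Filter.Eventually.of_forall (fun q => hgnn _))
  have hNik_nn : ∀ x : E d, 0 ≤ Nik γ δ g x :=
    fun x => Real.iSup_nonneg (fun s => abs_nonneg _)
  have hNik_lb : ∀ s0 ∈ Set.Icc (0:ℝ) η, ∀ x ∈ Metric.closedBall ((2⁻¹:ℝ) • γ s0) δ,
      δ/M ≤ Nik γ δ g x := by
    intro s0 hs0 x hx
    have hs0seg : s0 ∈ segI := ⟨by linarith [hs0.1], le_trans hs0.2 hη1⟩
    calc δ/M ≤ Avg γ δ g x s0 := hAvg_lb s0 hs0 x hx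
    _ ≤ |Avg γ δ g x s0| := le_abs_self _
    _ ≤ Nik γ δ g x := le_ciSup (hNik_bdd x) (⟨s0, hs0seg⟩ : segI)
  set Δ : ℝ := 8*δ/m with hΔdef
  have hΔ : 0 < Δ := by positivity
  set N : ℕ := ⌊η/Δ⌋₊ with hNdef
  set ctr : ℕ → E d := fun k => (2⁻¹:ℝ) • γ (k*Δ) with hctrdef
  have hkmem : ∀ k : ℕ, k ≤ N → ((k:ℝ)*Δ : ℝ) ∈ Set.Icc (0:ℝ) η := by
    intro k hk
    constructor
    · positivity
    · calc (k:ℝ)*Δ ≤ (N:ℝ)*Δ := by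
            apply mul_le_mul_of_nonneg_right _ hΔ.le
            exact_mod_cast hk
      _ ≤ (η/Δ)*Δ := mul_le_mul_of_nonneg_right (Nat.floor_le (by positivity)) hΔ.le
      _ = η := div_mul_cancel₀ _ hΔ.ne'
  set X : Set (E d) := ⋃ k ∈ Finset.range (N+1), Metric.closedBall (ctr k) δ with hXdef
  have hXmeas : MeasurableSet X :=
    MeasurableSet.biUnion (Finset.range (N+1)).countable_toSet
      (fun k _ => measurableSet_closedBall)
  have hdist : ∀ j k : ℕ, j < k → k ≤ N → δ + δ < dist (ctr j) (ctr k) := by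
    intro j k hjk hk
    have hjmem := hkmem j (le_of_lt (lt_of_lt_of_le hjk hk))
    have hkmem' := hkmem k hk
    have hle : (j:ℝ)*Δ ≤ (k:ℝ)*Δ := by
      apply mul_le_mul_of_nonneg_right _ hΔ.le
      exact_mod_cast hjk.le
    have h1 : m * ((k:ℝ)*Δ - (j:ℝ)*Δ) ≤ ‖γ ((k:ℝ)*Δ) - γ ((j:ℝ)*Δ)‖ :=
      hsep _ hjmem _ hkmem' hle
    have hjk1 : (1:ℝ) ≤ (k:ℝ) - j := by
      have hc1 : (j:ℝ)+1 ≤ k := by exact_mod_cast hjk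
      linarith
    have h2 : (8:ℝ)*δ ≤ m * ((k:ℝ)*Δ - (j:ℝ)*Δ) := by
      have e : (8:ℝ)*δ = m * Δ := by
        rw [hΔdef]; field_simp
      rw [e]
      have h3 : Δ ≤ ((k:ℝ) - j)*Δ := le_mul_of_one_le_left hΔ.le hjk1
      calc m * Δ ≤ m * (((k:ℝ) - j)*Δ) := mul_le_mul_of_nonneg_left h3 hm.le
      _ = m * ((k:ℝ)*Δ - (j:ℝ)*Δ) := by ring
    have hdd : dist (ctr j) (ctr k) = 2⁻¹ * ‖γ ((k:ℝ)*Δ) - γ ((j:ℝ)*Δ)‖ := by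
      show dist ((2⁻¹:ℝ) • γ ((j:ℝ)*Δ)) ((2⁻¹:ℝ) • γ ((k:ℝ)*Δ)) = _
      rw [dist_eq_norm, ← smul_sub, norm_smul, norm_sub_rev]
      norm_num
    rw [hdd]
    linarith
  have hdisj : (↑(Finset.range (N+1)) : Set ℕ).PairwiseDisjoint
      (fun k => Metric.closedBall (ctr k) δ) := by
    intro a ha b hb hab
    simp only [Finset.coe_range, Set.mem_Iio] at ha hb
    rcases lt_or_gt_of_ne hab with hlt | hgt
    · exact Metric.closedBall_disjoint_closedBall (hdist a b hlt (Nat.lt_succ_iff.mp hb))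
    · exact (Metric.closedBall_disjoint_closedBall (hdist b a hgt (Nat.lt_succ_iff.mp ha))).symm
  have hXvol : volume X = (N+1 : ℕ) * V := by
    rw [hXdef, measure_biUnion_finset hdisj (fun k _ => measurableSet_closedBall)]
    have he : ∀ k ∈ Finset.range (N+1), volume (Metric.closedBall (ctr k) δ) = V := by
      intro k _
      rw [Measure.addHaar_closedBall_center]
    rw [Finset.sum_congr rfl he, Finset.sum_const, Finset.card_range, nsmul_eq_mul]
  have hXvol_lb : ENNReal.ofReal (η/Δ) * V ≤ volume X := by
    rw [hXvol]
    have hNle : ENNReal.ofReal (η/Δ) ≤ ((N+1:ℕ) : ℝ≥0∞) := by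
      rw [← ENNReal.ofReal_natCast (N+1)]
      apply ENNReal.ofReal_le_ofReal
      push_cast
      exact (Nat.lt_floor_add_one _).le
    exact mul_le_mul_left hNle V
  set h : E d → ℝ := X.indicator (fun _ => δ/M) with hhdef
  have hhle : ∀ x, ‖h x‖ ≤ ‖Nik γ δ g x‖ := by
    intro x
    rw [Real.norm_eq_abs, Real.norm_eq_abs, abs_of_nonneg (hNik_nn x)]
    by_cases hx : x ∈ X
    · rw [hhdef, Set.indicator_of_mem hx, abs_of_nonneg hδM0.le]
      rw [hXdef] at hx
      simp only [Set.mem_iUnion] at hx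
      obtain ⟨k, hk, hxk⟩ := hx
      exact hNik_lb _ (hkmem k (Nat.lt_succ_iff.mp (Finset.mem_range.mp hk))) x hxk
    · rw [hhdef, Set.indicator_of_notMem hx, abs_zero]
      exact hNik_nn x
  have hgsn : eLpNorm g P volume = (volume Sg) ^ (1/p) := by
    rw [hgdef, eLpNorm_indicator_const hSgmeas hP0 hPtop, hPto]
    norm_num
  have hhn : ENNReal.ofReal (δ/M) * (volume X) ^ (1/p) = eLpNorm h P volume := by
    rw [hhdef, eLpNorm_indicator_const hXmeas hP0 hPtop, hPto]
    congr 1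
    rw [← ofReal_norm_eq_enorm, Real.norm_eq_abs, abs_of_nonneg hδM0.le]
  have hq : (0:ℝ) ≤ 1/p := by positivity
  have realkey : c * δ^(1-2/p) * ((3*δ)^d*(2*(δ/M)))^(1/p)
      ≤ (δ/M) * ((η*m/8)*δ^(d-1))^(1/p) := by
    have e1 : ((3*δ)^d*(2*(δ/M)) : ℝ) = (2*3^d/M) * δ^(d+1) := by
      rw [mul_pow, pow_succ]
      field_simp
    have eBA : ((η*m/8) / (2*3^d/M))^(1/p) * (2*3^d/M)^(1/p) = (η*m/8)^(1/p) := by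
      rw [← Real.mul_rpow (by positivity) hA0.le, div_mul_cancel₀ _ hA0.ne']
    have eR : δ * ((δ^(d-1):ℝ))^((1:ℝ)/p) = δ^((1:ℝ) + ((d-1:ℕ):ℝ)*(1/p)) := by
      rw [← Real.rpow_natCast δ (d-1), ← Real.rpow_mul hδ.le, Real.rpow_add hδ,
        Real.rpow_one]
    have eL : δ^((1:ℝ)-2/p) * ((δ^(d+1):ℝ))^((1:ℝ)/p)
        = δ^((1-2/p) + ((d+1:ℕ):ℝ)*(1/p)) := by
      rw [← Real.rpow_natCast δ (d+1), ← Real.rpow_mul hδ.le, ← Real.rpow_add hδ]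
    have eδ : δ^((1:ℝ)-2/p) * ((δ^(d+1):ℝ))^((1:ℝ)/p) = δ * ((δ^(d-1):ℝ))^((1:ℝ)/p) := by
      rw [eL, eR]
      congr 1
      have hcast : ((d-1:ℕ):ℝ) = (d:ℝ) - 1 := by
        rw [Nat.cast_sub hd]; norm_num
      rw [hcast]
      push_cast
      field_simp
      ring
    rw [e1]
    have key : c * δ^((1:ℝ)-2/p) * ((2*3^d/M) * δ^(d+1))^((1:ℝ)/p)
        = (δ/M) * ((η*m/8)^((1:ℝ)/p) * ((δ^(d-1):ℝ))^((1:ℝ)/p)) := by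
      rw [Real.mul_rpow hA0.le (by positivity), hcdef]
      calc (1/M) * ((η * m / 8) / (2 * 3^d / M)) ^ (1/p) * δ^((1:ℝ)-2/p)
            * ((2*3^d/M)^((1:ℝ)/p) * ((δ^(d+1):ℝ))^((1:ℝ)/p))
          = (1/M) * (((η * m / 8) / (2 * 3^d / M)) ^ (1/p) * (2*3^d/M)^((1:ℝ)/p))
            * (δ^((1:ℝ)-2/p) * ((δ^(d+1):ℝ))^((1:ℝ)/p)) := by ring
      _ = (1/M) * (η*m/8)^((1:ℝ)/p) * (δ * ((δ^(d-1):ℝ))^((1:ℝ)/p)) := by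
            rw [eBA, eδ]
      _ = (δ/M) * ((η*m/8)^((1:ℝ)/p) * ((δ^(d-1):ℝ))^((1:ℝ)/p)) := by ring
    rw [key, Real.mul_rpow hB0.le (by positivity)]
  refine ⟨g, memLp_indicator_const P hSgmeas 1 (Or.inr hSgvol_top), ?_, hgnn, ?_⟩
  · rw [hgsn]
    intro hcon
    rw [ENNReal.rpow_eq_zero_iff] at hcon
    rcases hcon with ⟨h1, _⟩ | ⟨h1, _⟩
    · exact hSgvol_pos h1
    · exact hSgvol_top h1
  · have hSgvol' : volume Sg = ENNReal.ofReal ((3*δ)^d * (2*(δ/M))) * V₁ := by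
      rw [hSgvol, mul_right_comm, ← ENNReal.ofReal_mul (by positivity)]
    have hXvol_lb' : ENNReal.ofReal ((η*m/8) * δ^(d-1)) * V₁ ≤ volume X := by
      refine le_trans ?_ hXvol_lb
      rw [hVval, ← mul_assoc, ← ENNReal.ofReal_mul (by positivity)]
      apply mul_le_mul_left
      apply ENNReal.ofReal_le_ofReal
      apply le_of_eq
      have hd1 : d = (d-1)+1 := (Nat.succ_pred_eq_of_pos hd).symm
      have hpow : δ^d = δ^(d-1)*δ := by
        conv_lhs => rw [hd1]
        rw [pow_succ]
      rw [hpow, hΔdef]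
      field_simp
    calc ENNReal.ofReal (c * δ ^ (1 - 2/p)) * eLpNorm g P volume
        = ENNReal.ofReal (c * δ ^ (1-2/p)) * (volume Sg) ^ (1/p) := by rw [hgsn]
    _ = ENNReal.ofReal (c * δ ^ (1-2/p))
        * ((ENNReal.ofReal ((3*δ)^d*(2*(δ/M))))^(1/p) * V₁^(1/p)) := by
          rw [hSgvol', ENNReal.mul_rpow_of_nonneg _ _ hq]
    _ = ENNReal.ofReal (c * δ ^ (1-2/p) * ((3*δ)^d*(2*(δ/M)))^(1/p)) * V₁^(1/p) := by
          rw [ENNReal.ofReal_rpow_of_pos (by positivity),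
            ENNReal.ofReal_mul (by positivity : (0:ℝ) ≤ c * δ ^ (1-2/p))]
          exact (mul_assoc _ _ _).symm
    _ ≤ ENNReal.ofReal ((δ/M) * ((η*m/8)*δ^(d-1))^(1/p)) * V₁^(1/p) :=
          mul_le_mul_left (ENNReal.ofReal_le_ofReal realkey) _
    _ = ENNReal.ofReal (δ/M) * ((ENNReal.ofReal ((η*m/8)*δ^(d-1)))^(1/p) * V₁^(1/p)) := by
          rw [ENNReal.ofReal_rpow_of_pos (by positivity),
            ENNReal.ofReal_mul hδM0.le]
          exact mul_assoc _ _ _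
    _ = ENNReal.ofReal (δ/M) * (ENNReal.ofReal ((η*m/8)*δ^(d-1)) * V₁)^(1/p) := by
          rw [ENNReal.mul_rpow_of_nonneg _ _ hq]
    _ ≤ ENNReal.ofReal (δ/M) * (volume X)^(1/p) :=
          mul_le_mul_right (ENNReal.rpow_le_rpow hXvol_lb' hq) _
    _ = eLpNorm h P volume := hhn
    _ ≤ eLpNorm (Nik γ δ g) P volume := eLpNorm_mono hhle
end
end
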